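/- If α is an irrational real number equivalent to √2, then 𝔨*(α) = 𝔨(α) = 2·λ(α); in particular λ(√2) = 1/√8 and 𝔨(√2) = 𝔨*(√2) = 1/√2. -/

import Mathlib

open Filter Real Set

/-- Iterates of the Gauss map starting from `α`: `x₀ = α`, `x_{n+1} = 1 / fract (xₙ)`. -/
noncomputable def gaussIter (α : ℝ) : ℕ → ℝ
  | 0 => α
  | n + 1 => (Int.fract (gaussIter α n))⁻¹

/-- Partial quotients of the continued fraction `α = [a₀; a₁, a₂, …]`. -/
noncomputable def cfA (α : ℝ) (n : ℕ) : ℤ := ⌊gaussIter α n⌋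

/-- Denominators of convergents, with shifted index: `cfQ α 0 = q₋₁ = 0`,
`cfQ α 1 = q₀ = 1`, and `cfQ α (n+1) = qₙ` where `qₙ = aₙ q_{n-1} + q_{n-2}`. -/
noncomputable def cfQ (α : ℝ) : ℕ → ℤ
  | 0 => 0
  | 1 => 1
  | n + 2 => cfA α (n + 1) * cfQ α (n + 1) + cfQ α n

/-- Numerators of convergents, with shifted index: `cfP α 0 = p₋₁ = 1`,
`cfP α 1 = p₀ = ⌊α⌋`, and `cfP α (n+1) = pₙ` where `pₙ = aₙ p_{n-1} + p_{n-2}`. -/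
noncomputable def cfP (α : ℝ) : ℕ → ℤ
  | 0 => 1
  | 1 => ⌊α⌋
  | n + 2 => cfA α (n + 1) * cfP α (n + 1) + cfP α n

/-- `qₙ`, the denominator of the `n`-th convergent of `α`. -/
noncomputable def cfDen (α : ℝ) (n : ℕ) : ℤ := cfQ α (n + 1)

/-- `pₙ`, the numerator of the `n`-th convergent of `α`. -/
noncomputable def cfNum (α : ℝ) (n : ℕ) : ℤ := cfP α (n + 1)

/-- `ξₙ = |qₙ α − pₙ|`. -/
noncomputable def cfXi (α : ℝ) (n : ℕ) : ℝ := |(cfDen α n : ℝ) * α - (cfNum α n : ℝ)|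

/-- `ψ_α(t) = min { ‖qα‖ : q ∈ ℤ, 1 ≤ q ≤ t }`. -/
noncomputable def psiFn (α t : ℝ) : ℝ :=
  sInf {x : ℝ | ∃ p q : ℤ, 1 ≤ q ∧ (q : ℝ) ≤ t ∧ x = |(q : ℝ) * α - (p : ℝ)|}

/-- `ψ_α^[2](t)`: the same minimum but over pairs `(p,q)` that are not `(pₙ,qₙ)` for any `n ≥ 0`. -/
noncomputable def psi2Fn (α t : ℝ) : ℝ :=
  sInf {x : ℝ | ∃ p q : ℤ, 1 ≤ q ∧ (q : ℝ) ≤ t ∧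
    (∀ n : ℕ, ¬(p = cfNum α n ∧ q = cfDen α n)) ∧ x = |(q : ℝ) * α - (p : ℝ)|}

/-- `ψ_α^[2]*(t)`: the same minimum but over pairs `(p,q)` with `p/q ≠ pₙ/qₙ` for all `n ≥ 0`. -/
noncomputable def psi2sFn (α t : ℝ) : ℝ :=
  sInf {x : ℝ | ∃ p q : ℤ, 1 ≤ q ∧ (q : ℝ) ≤ t ∧
    (∀ n : ℕ, (p : ℝ) / (q : ℝ) ≠ (cfNum α n : ℝ) / (cfDen α n : ℝ)) ∧
    x = |(q : ℝ) * α - (p : ℝ)|}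

/-- `λ(α) = liminf_{t→∞} t · ψ_α(t)`. -/
noncomputable def lamOf (α : ℝ) : ℝ := Filter.liminf (fun t : ℝ => t * psiFn α t) Filter.atTop

/-- `𝔨(α) = liminf_{t→∞} t · ψ_α^[2](t)`. -/
noncomputable def kOf (α : ℝ) : ℝ := Filter.liminf (fun t : ℝ => t * psi2Fn α t) Filter.atTop

/-- `𝔨*(α) = liminf_{t→∞} t · ψ_α^[2]*(t)`. -/
noncomputable def ksOf (α : ℝ) : ℝ := Filter.liminf (fun t : ℝ => t * psi2sFn α t) Filter.atTop

/-- `α` and `β` are equivalent: `β = (aα+b)/(cα+d)` with `a,b,c,d ∈ ℤ`, `|ad − bc| = 1`. -/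
def CFEquiv (α β : ℝ) : Prop :=
  ∃ a b c d : ℤ, |a * d - b * c| = 1 ∧ β = ((a : ℝ) * α + (b : ℝ)) / ((c : ℝ) * α + (d : ℝ))

/-- The spectrum `𝕃₂ = {𝔨(α) : α irrational}`. -/
def L2 : Set ℝ := {x : ℝ | ∃ α : ℝ, Irrational α ∧ kOf α = x}

/-- The spectrum `𝕃₂* = {𝔨*(α) : α irrational}`. -/
def L2s : Set ℝ := {x : ℝ | ∃ α : ℝ, Irrational α ∧ ksOf α = x}

/-- `𝔔(α)`: the set of positive integers at which `ψ_α^[2]` is discontinuous. -/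
def QSet (α : ℝ) : Set ℤ := {m : ℤ | 0 < m ∧ ¬ ContinuousAt (psi2Fn α) (m : ℝ)}

/-- `𝔛(α)`: the set of positive integers at which `ψ_α^[2]*` is discontinuous. -/
def XSet (α : ℝ) : Set ℤ := {m : ℤ | 0 < m ∧ ¬ ContinuousAt (psi2sFn α) (m : ℝ)}

/-- The members of the list `l` are successive elements of `S`: they belong to `S`,
are listed in increasing order, and no element of `S` lies strictly between
consecutive listed ones. -/
def SuccessiveIn (S : Set ℤ) (l : List ℤ) : Prop :=
  (∀ x ∈ l, x ∈ S) ∧ l.Chain' (fun x y => x < y ∧ ∀ z ∈ S, ¬(x < z ∧ z < y))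

/-- `κ¹ₙ = (q_{n-2} + q_{n-1})(ξ_{n-2} − ξ_{n-1})`. -/
noncomputable def kap1 (α : ℝ) (n : ℕ) : ℝ :=
  ((cfDen α (n - 2) + cfDen α (n - 1) : ℤ) : ℝ) * (cfXi α (n - 2) - cfXi α (n - 1))

/-- `κ²ₙ = (qₙ − q_{n-1})(ξ_{n-1} + ξₙ)`. -/
noncomputable def kap2 (α : ℝ) (n : ℕ) : ℝ :=
  ((cfDen α n - cfDen α (n - 1) : ℤ) : ℝ) * (cfXi α (n - 1) + cfXi α n)

/-- `κ³ₙ = (2q_{n-2} + q_{n-1})(2ξ_{n-2} − ξ_{n-1})`. -/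
noncomputable def kap3 (α : ℝ) (n : ℕ) : ℝ :=
  ((2 * cfDen α (n - 2) + cfDen α (n - 1) : ℤ) : ℝ) * (2 * cfXi α (n - 2) - cfXi α (n - 1))

/-- `κ⁴ₙ = 4 q_{n-1} ξ_{n-1}`. -/
noncomputable def kap4 (α : ℝ) (n : ℕ) : ℝ :=
  ((4 * cfDen α (n - 1) : ℤ) : ℝ) * cfXi α (n - 1)
section Aux

open Filter

lemma liminf_eq_of_bounds (f : ℝ → ℝ) (L : ℝ)
    (h1 : ∀ ε : ℝ, 0 < ε → ∀ᶠ t in atTop, L - ε ≤ f t)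
    (h2 : ∀ ε : ℝ, 0 < ε → ∃ᶠ t in atTop, f t ≤ L + ε) :
    Filter.liminf f Filter.atTop = L := by
  have hb : Filter.IsBoundedUnder (· ≥ ·) Filter.atTop f :=
    ⟨L - 1, by simpa [Filter.eventually_map] using h1 1 one_pos⟩
  have hc : Filter.IsCoboundedUnder (· ≥ ·) Filter.atTop f :=
    Filter.IsCoboundedUnder.of_frequently_le (h2 1 one_pos)
  apply le_antisymm
  · apply le_of_forall_pos_le_add
    intro ε hε
    exact (Filter.liminf_le_of_frequently_le (h2 ε hε) hb).trans (by linarith)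
  · apply le_of_forall_pos_le_add
    intro ε hε
    have := Filter.le_liminf_of_le hc (h1 ε hε)
    linarith

lemma exists_step (c : ℕ → ℤ) (hc : ∀ k, c k < c (k + 1)) (M : ℕ) (t : ℝ)
    (h : (c M : ℝ) ≤ t) : ∃ n, M ≤ n ∧ (c n : ℝ) ≤ t ∧ t < c (n + 1) := by
  have hgrow : ∀ j : ℕ, (c M : ℝ) + j ≤ c (M + j) := by
    intro j
    induction j with
    | zero => simp
    | succ k ih =>
      have h2 := hc (M + k)
      have : (c (M + k) : ℝ) + 1 ≤ c (M + k + 1) := by exact_mod_cast h2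
      push_cast at ih ⊢
      have : (M + (k+1) : ℕ) = (M + k) + 1 := by omega
      rw [this]
      push_cast
      linarith
  have hex : ∃ j : ℕ, t < c (M + j) := by
    obtain ⟨j, hj⟩ := exists_nat_gt (t - c M)
    exact ⟨j, by have := hgrow j; linarith⟩
  classical
  let j := Nat.find hex
  have hj : t < c (M + j) := Nat.find_spec hex
  have hjne : j ≠ 0 := by
    intro h0
    rw [h0] at hj
    simp at hj
    linarith
  obtain ⟨i, hi⟩ := Nat.exists_eq_succ_of_ne_zero hjne
  have hmin : ¬ t < c (M + i) := Nat.find_min hex (by omega)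
  refine ⟨M + i, by omega, by linarith [not_lt.mp hmin], ?_⟩
  have : M + i + 1 = M + j := by omega
  rw [this]; exact hj

end Aux
section CFBasic

open Filter Real

variable {α : ℝ}

lemma gaussIter_succ (α : ℝ) (n : ℕ) :
    gaussIter α (n + 1) = (Int.fract (gaussIter α n))⁻¹ := rfl

lemma irrational_gaussIter (hα : Irrational α) : ∀ n, Irrational (gaussIter α n) := by
  intro n
  induction n with
  | zero => exact hα
  | succ k ih =>
    rw [gaussIter_succ]
    have : Irrational (Int.fract (gaussIter α k)) := by
      rw [Int.fract]
      exact Irrational.sub_intCast ih _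
    exact this.inv

lemma fract_pos_of_irrational {x : ℝ} (hx : Irrational x) : 0 < Int.fract x := by
  rcases lt_or_eq_of_le (Int.fract_nonneg x) with h | h
  · exact h
  · exfalso
    have : x = ⌊x⌋ := by
      have := Int.fract_eq_iff.mp h.symm
      rw [Int.fract] at h
      linarith [h.symm]
    exact hx.ne_int ⌊x⌋ this

lemma gaussIter_gt_one (hα : Irrational α) (n : ℕ) : 1 < gaussIter α (n + 1) := by
  rw [gaussIter_succ]
  have h1 : 0 < Int.fract (gaussIter α n) := fract_pos_of_irrational (irrational_gaussIter hα n)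
  have h2 : Int.fract (gaussIter α n) < 1 := Int.fract_lt_one _
  rw [lt_inv_comm₀ one_pos h1] -- maybe wrong name
  simpa using h2

lemma gaussIter_eq_floor_add_inv (hα : Irrational α) (n : ℕ) :
    gaussIter α n = (cfA α n : ℝ) + (gaussIter α (n + 1))⁻¹ := by
  rw [gaussIter_succ, inv_inv, cfA, Int.fract]
  ring

lemma cfA_ge_one (hα : Irrational α) (n : ℕ) : 1 ≤ cfA α (n + 1) := by
  have := gaussIter_gt_one hα n
  have : (1 : ℤ) ≤ ⌊gaussIter α (n+1)⌋ := by
    rw [Int.le_floor]; push_cast; linarith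
  exact this

end CFBasic
section CFRec

open Filter Real

variable {α : ℝ}

noncomputable def cfF (α : ℝ) (n : ℕ) : ℝ := (cfQ α n : ℝ) * α - (cfP α n : ℝ)

lemma cfQ_zero (α : ℝ) : cfQ α 0 = 0 := rfl
lemma cfQ_one (α : ℝ) : cfQ α 1 = 1 := rfl
lemma cfQ_rec (α : ℝ) (n : ℕ) : cfQ α (n + 2) = cfA α (n + 1) * cfQ α (n + 1) + cfQ α n := rfl
lemma cfP_zero (α : ℝ) : cfP α 0 = 1 := rfl
lemma cfP_one (α : ℝ) : cfP α 1 = ⌊α⌋ := rfl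
lemma cfP_rec (α : ℝ) (n : ℕ) : cfP α (n + 2) = cfA α (n + 1) * cfP α (n + 1) + cfP α n := rfl

lemma cfQ_nonneg (hα : Irrational α) : ∀ n, 0 ≤ cfQ α n := by
  intro n
  induction n using Nat.strong_induction_on with
  | _ n ih =>
    match n with
    | 0 => rw [cfQ_zero]
    | 1 => rw [cfQ_one]; norm_num
    | (k + 2) =>
      have h1 := ih (k + 1) (by omega)
      have h0 := ih k (by omega)
      have ha := cfA_ge_one hα k
      rw [cfQ_rec]
      nlinarith

lemma cfQ_one_le (hα : Irrational α) : ∀ n, 1 ≤ n → 1 ≤ cfQ α n := by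
  intro n
  induction n using Nat.strong_induction_on with
  | _ n ih =>
    match n with
    | 0 => omega
    | 1 => intro _; rw [cfQ_one]
    | (k + 2) =>
      intro _
      have h1 := ih (k + 1) (by omega) (by omega)
      have h0 := cfQ_nonneg hα k
      have ha := cfA_ge_one hα k
      rw [cfQ_rec]
      nlinarith

lemma cfQ_succ_lt (hα : Irrational α) (n : ℕ) (hn : 1 ≤ n) : cfQ α (n + 1) < cfQ α (n + 2) := by
  have h1 := cfQ_one_le hα (n + 1) (by omega)
  have h0 := cfQ_one_le hα n hn
  have ha := cfA_ge_one hα n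
  rw [cfQ_rec]
  nlinarith

lemma cfDen_lt_succ (hα : Irrational α) (n : ℕ) (hn : 1 ≤ n) : cfDen α n < cfDen α (n + 1) := by
  rw [cfDen, cfDen]
  exact cfQ_succ_lt hα n hn

lemma cfDen_one_le (hα : Irrational α) (n : ℕ) : 1 ≤ cfDen α n := cfQ_one_le hα (n + 1) (by omega)

lemma cfDen_le_succ (hα : Irrational α) (n : ℕ) : cfDen α n ≤ cfDen α (n + 1) := by
  match n with
  | 0 =>
    rw [cfDen, cfDen]
    rw [cfQ_one]
    exact cfQ_one_le hα 2 (by omega)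
  | (k + 1) => exact le_of_lt (cfDen_lt_succ hα (k + 1) (by omega))

lemma cfDen_mono (hα : Irrational α) : Monotone (cfDen α) :=
  monotone_nat_of_le_succ (cfDen_le_succ hα)

lemma cfDen_ge (hα : Irrational α) (n : ℕ) : (n : ℤ) ≤ cfDen α n := by
  induction n with
  | zero => simp; linarith [cfDen_one_le hα 0]
  | succ k ih =>
    match k with
    | 0 => have := cfDen_one_le hα 1; push_cast; omega
    | (j + 1) =>
      have := cfDen_lt_succ hα (j + 1) (by omega)
      push_cast at ih ⊢
      omega

lemma alpha_identity (hα : Irrational α) : ∀ n : ℕ,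
    α * ((cfQ α (n + 1) : ℝ) * gaussIter α (n + 1) + (cfQ α n : ℝ)) =
      (cfP α (n + 1) : ℝ) * gaussIter α (n + 1) + (cfP α n : ℝ) := by
  intro n
  induction n with
  | zero =>
    have hfr : Int.fract α ≠ 0 := ne_of_gt (fract_pos_of_irrational hα)
    have h1 : Int.fract α * (Int.fract α)⁻¹ = 1 := mul_inv_cancel₀ hfr
    have h2 : (⌊α⌋ : ℝ) + Int.fract α = α := by rw [Int.fract]; ring
    rw [cfQ_one, cfQ_zero, cfP_one, cfP_zero]
    push_cast
    rw [gaussIter_succ]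
    show α * (1 * (Int.fract α)⁻¹ + 0) = (⌊α⌋:ℝ) * (Int.fract α)⁻¹ + 1
    linear_combination h1 - (Int.fract α)⁻¹ * h2
  | succ k ih =>
    have hfr : Int.fract (gaussIter α (k+1)) ≠ 0 :=
      ne_of_gt (fract_pos_of_irrational (irrational_gaussIter hα (k+1)))
    have hprod : gaussIter α (k + 2) * (gaussIter α (k + 1) - (cfA α (k+1) : ℝ)) = 1 := by
      rw [gaussIter_succ, cfA, show gaussIter α (k+1) - (⌊gaussIter α (k+1)⌋ : ℝ)
            = Int.fract (gaussIter α (k+1)) from rfl]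
      exact inv_mul_cancel₀ hfr
    rw [cfQ_rec, cfP_rec]
    push_cast
    linear_combination gaussIter α (k+2) * ih +
      ((cfP α (k+1) : ℝ) - α * (cfQ α (k+1) : ℝ)) * hprod

lemma cfF_zero : cfF α 0 = -1 := by rw [cfF, cfQ_zero, cfP_zero]; push_cast; ring

lemma cfF_one : cfF α 1 = Int.fract α := by rw [cfF, cfQ_one, cfP_one, Int.fract]; push_cast; ring

lemma cfF_succ (hα : Irrational α) (n : ℕ) :
    cfF α (n + 1) * gaussIter α (n + 1) = - cfF α n := by
  have := alpha_identity hα n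
  rw [cfF, cfF]
  linear_combination this

lemma cfF_sign (hα : Irrational α) : ∀ n, 0 < (-1 : ℝ)^n * cfF α (n + 1) := by
  intro n
  induction n with
  | zero => simpa [cfF_one] using fract_pos_of_irrational hα
  | succ k ih =>
    have hg : 1 < gaussIter α (k + 2) := gaussIter_gt_one hα (k + 1)
    have hrec := cfF_succ hα (k + 1)
    have key : ((-1:ℝ)^(k+1) * cfF α (k+2)) * gaussIter α (k + 2) = (-1:ℝ)^k * cfF α (k+1) := by
      rw [pow_succ]
      linear_combination (-(-1:ℝ)^k) * hrec
    nlinarith [key, ih, hg]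

lemma cfXi_eq (hα : Irrational α) (n : ℕ) : cfXi α n = (-1 : ℝ)^n * cfF α (n + 1) := by
  have hs := cfF_sign hα n
  have h0 : cfXi α n = |cfF α (n + 1)| := by rw [cfXi, cfF, cfDen, cfNum]
  rw [h0]
  have h1 : |(-1 : ℝ)^n| = 1 := by
    rw [abs_pow, abs_neg, abs_one, one_pow]
  calc |cfF α (n+1)| = |(-1:ℝ)^n * cfF α (n+1)| := by rw [abs_mul, h1, one_mul]
  _ = (-1:ℝ)^n * cfF α (n+1) := abs_of_pos hs

lemma cfXi_pos (hα : Irrational α) (n : ℕ) : 0 < cfXi α n := by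
  have := cfF_sign hα n
  rw [cfXi_eq hα]
  exact this

lemma cfXi_succ (hα : Irrational α) (n : ℕ) :
    cfXi α (n + 1) * gaussIter α (n + 2) = cfXi α n := by
  have hrec := cfF_succ hα (n + 1)
  rw [cfXi_eq hα, cfXi_eq hα]
  rw [pow_succ]
  linear_combination (-(-1:ℝ)^n) * hrec

lemma cfXi_lt (hα : Irrational α) (n : ℕ) : cfXi α (n + 1) < cfXi α n := by
  have h := cfXi_succ hα n
  have hg : 1 < gaussIter α (n + 2) := gaussIter_gt_one hα (n + 1)
  have hp : 0 < cfXi α (n + 1) := cfXi_pos hα (n + 1)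
  nlinarith

lemma cfXi_anti (hα : Irrational α) : StrictAnti (cfXi α) :=
  strictAnti_nat_of_succ_lt (cfXi_lt hα)

lemma cfDet (α : ℝ) : ∀ n : ℕ, cfP α (n + 1) * cfQ α n - cfP α n * cfQ α (n + 1) = (-1)^(n+1) := by
  intro n
  induction n with
  | zero => rw [cfP_one, cfP_zero, cfQ_zero, cfQ_one]; ring
  | succ k ih =>
    rw [cfQ_rec, cfP_rec]
    have h2 : ((-1 : ℤ))^(k+1+1) = -((-1:ℤ))^(k+1) := by ring
    rw [h2]
    linear_combination -ih

lemma cfDet' (α : ℝ) (n : ℕ) :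
    cfNum α (n + 1) * cfDen α n - cfNum α n * cfDen α (n + 1) = (-1)^n := by
  rw [cfNum, cfNum, cfDen, cfDen]
  have := cfDet α (n + 1)
  have h2 : ((-1 : ℤ))^(n+1+1) = (-1)^n := by ring
  rw [h2] at this
  exact this

lemma cfFF (α : ℝ) (n : ℕ) : (cfDen α n : ℝ) * α - (cfNum α n : ℝ) = cfF α (n + 1) := by
  rw [cfF, cfDen, cfNum]

end CFRec
section Tail

open Filter Real

lemma sqrt2_sq : Real.sqrt 2 ^ 2 = 2 := Real.sq_sqrt (by norm_num)

lemma sqrt2_gt : (1.414 : ℝ) < Real.sqrt 2 := by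
  nlinarith [sqrt2_sq, Real.sqrt_nonneg 2]

lemma sqrt2_lt : Real.sqrt 2 < 1.415 := by
  nlinarith [sqrt2_sq, Real.sqrt_nonneg 2]

variable {α : ℝ} {N : ℕ}

lemma cfA_tail (htail : ∀ n, N ≤ n → gaussIter α n = 1 + Real.sqrt 2)
    (n : ℕ) (hn : N ≤ n) : cfA α n = 2 := by
  rw [cfA, htail n hn, Int.floor_eq_iff]
  constructor
  · push_cast; nlinarith [sqrt2_gt]
  · push_cast; nlinarith [sqrt2_lt]

lemma cfXi_tail (hα : Irrational α) (htail : ∀ n, N ≤ n → gaussIter α n = 1 + Real.sqrt 2)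
    (n : ℕ) (hn : N ≤ n + 2) : cfXi α n = (1 + Real.sqrt 2) * cfXi α (n + 1) := by
  have h := cfXi_succ hα n
  rw [htail (n + 2) hn] at h
  linarith [h]

lemma cfDen_tail (htail : ∀ n, N ≤ n → gaussIter α n = 1 + Real.sqrt 2)
    (n : ℕ) (hn : N ≤ n + 2) : cfDen α (n + 2) = 2 * cfDen α (n + 1) + cfDen α n := by
  rw [cfDen, cfDen, cfDen, show n + 2 + 1 = (n + 1) + 2 from rfl, cfQ_rec,
    cfA_tail htail (n + 2) hn]

lemma cfNum_tail (htail : ∀ n, N ≤ n → gaussIter α n = 1 + Real.sqrt 2)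
    (n : ℕ) (hn : N ≤ n + 2) : cfNum α (n + 2) = 2 * cfNum α (n + 1) + cfNum α n := by
  rw [cfNum, cfNum, cfNum, show n + 2 + 1 = (n + 1) + 2 from rfl, cfP_rec,
    cfA_tail htail (n + 2) hn]

lemma basis_val (hα : Irrational α) (n : ℕ) (p q a b : ℤ)
    (ha : q = a * cfDen α (n + 1) + b * cfDen α n)
    (hb : p = a * cfNum α (n + 1) + b * cfNum α n) :
    (q : ℝ) * α - (p : ℝ) =
      (-1 : ℝ)^n * ((b : ℝ) * cfXi α n - (a : ℝ) * cfXi α (n + 1)) := by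
  have hx0 : cfXi α n = (-1 : ℝ)^n * ((cfDen α n : ℝ) * α - (cfNum α n : ℝ)) := by
    rw [cfXi_eq hα, cfFF]
  have hx1 : cfXi α (n + 1) = (-1 : ℝ)^(n + 1) *
      ((cfDen α (n + 1) : ℝ) * α - (cfNum α (n + 1) : ℝ)) := by
    rw [cfXi_eq hα, cfFF]
  have hsqR : ((-1 : ℝ)^n)^2 = 1 := by
    rw [← pow_mul, mul_comm, pow_mul]; norm_num
  have haR : (q : ℝ) = (a : ℝ) * (cfDen α (n + 1) : ℝ) + (b : ℝ) * (cfDen α n : ℝ) := by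
    exact_mod_cast congrArg (Int.cast : ℤ → ℝ) ha
  have hbR : (p : ℝ) = (a : ℝ) * (cfNum α (n + 1) : ℝ) + (b : ℝ) * (cfNum α n : ℝ) := by
    exact_mod_cast congrArg (Int.cast : ℤ → ℝ) hb
  rw [hx0, hx1, pow_succ]
  linear_combination α * haR - hbR -
    ((a : ℝ) * ((cfDen α (n+1) : ℝ) * α - (cfNum α (n+1) : ℝ)) +
     (b : ℝ) * ((cfDen α n : ℝ) * α - (cfNum α n : ℝ))) * hsqR

lemma basis_rep (hα : Irrational α) (n : ℕ) (p q : ℤ) : ∃ a b : ℤ,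
    q = a * cfDen α (n + 1) + b * cfDen α n ∧
    p = a * cfNum α (n + 1) + b * cfNum α n ∧
    (q : ℝ) * α - (p : ℝ) =
      (-1 : ℝ)^n * ((b : ℝ) * cfXi α n - (a : ℝ) * cfXi α (n + 1)) := by
  have hD := cfDet' α n
  have hsq : ((-1 : ℤ)^n)^2 = 1 := by
    rw [← pow_mul, mul_comm, pow_mul]; norm_num
  refine ⟨(-1)^n * (p * cfDen α n - q * cfNum α n),
          (-1)^n * (q * cfNum α (n + 1) - p * cfDen α (n + 1)), ?_, ?_, ?_⟩
  · linear_combination (-(-1 : ℤ)^n * q) * hD - q * hsq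
  · linear_combination (-(-1 : ℤ)^n * p) * hD - p * hsq
  · apply basis_val hα n p q
    · linear_combination (-(-1 : ℤ)^n * q) * hD - q * hsq
    · linear_combination (-(-1 : ℤ)^n * p) * hD - p * hsq

end Tail
section Cases

open Real

lemma case_one (Q Q' a b : ℤ) (hQ' : 1 ≤ Q') (hQ : Q' < Q)
    (hlow : 1 ≤ a * Q + b * Q') (hhigh : a * Q + b * Q' < 2 * Q + Q') :
    1 ≤ |(b : ℝ) * (1 + Real.sqrt 2) - (a : ℝ)| := by
  have hs2 := sqrt2_gt
  rcases lt_trichotomy b 0 with hb | hb | hb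
  · -- b ≤ -1
    have hb1 : b ≤ -1 := by omega
    have ha : 0 ≤ a := by nlinarith
    have hval : (1 : ℝ) ≤ (a : ℝ) - (b : ℝ) * (1 + Real.sqrt 2) := by
      have hbr : (b : ℝ) ≤ -1 := by exact_mod_cast hb1
      have har : (0 : ℝ) ≤ (a : ℝ) := by exact_mod_cast ha
      nlinarith
    calc (1:ℝ) ≤ (a : ℝ) - (b : ℝ) * (1 + Real.sqrt 2) := hval
    _ = -((b : ℝ) * (1 + Real.sqrt 2) - a) := by ring
    _ ≤ |(b : ℝ) * (1 + Real.sqrt 2) - a| := neg_le_abs _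
  · -- b = 0
    subst hb
    have ha : 1 ≤ a := by nlinarith
    have : (1 : ℝ) ≤ |(a : ℝ)| := by
      rw [abs_of_pos (by exact_mod_cast ha : (0:ℝ) < (a:ℝ))]
      exact_mod_cast ha
    simpa using this
  · -- b ≥ 1
    have hb1 : 1 ≤ b := hb
    rcases le_or_gt a 1 with ha | ha
    · have hbr : (1 : ℝ) ≤ (b : ℝ) := by exact_mod_cast hb1
      have har : (a : ℝ) ≤ 1 := by exact_mod_cast ha
      have hval : (1 : ℝ) ≤ (b : ℝ) * (1 + Real.sqrt 2) - a := by nlinarith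
      exact hval.trans (le_abs_self _)
    · exfalso; nlinarith

lemma case_two (Q Q' a b : ℤ) (hQ' : 1 ≤ Q') (hQ : Q' < Q)
    (hlow : 1 ≤ a * Q + b * Q') (hhigh : a * Q + b * Q' < 3 * Q + Q')
    (hex1 : ¬(a = 1 ∧ b = 0)) (hex2 : ¬(a = 2 ∧ b = 1)) :
    Real.sqrt 2 ≤ |(b : ℝ) * (1 + Real.sqrt 2) - (a : ℝ)| := by
  have hs2 := sqrt2_gt
  have hs2' := sqrt2_lt
  rcases lt_trichotomy b 0 with hb | hb | hb
  · -- b ≤ -1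
    have hb1 : b ≤ -1 := by omega
    have ha : 0 ≤ a := by nlinarith
    have hbr : (b : ℝ) ≤ -1 := by exact_mod_cast hb1
    have har : (0 : ℝ) ≤ (a : ℝ) := by exact_mod_cast ha
    have hval : Real.sqrt 2 ≤ (a : ℝ) - (b : ℝ) * (1 + Real.sqrt 2) := by nlinarith
    calc Real.sqrt 2 ≤ (a : ℝ) - (b : ℝ) * (1 + Real.sqrt 2) := hval
    _ = -((b : ℝ) * (1 + Real.sqrt 2) - a) := by ring
    _ ≤ |(b : ℝ) * (1 + Real.sqrt 2) - a| := neg_le_abs _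
  · -- b = 0
    subst hb
    have ha : 1 ≤ a := by nlinarith
    have ha2 : 2 ≤ a := by
      rcases eq_or_lt_of_le ha with h | h
      · exact absurd ⟨h.symm, rfl⟩ hex1
      · omega
    have har : (2 : ℝ) ≤ (a : ℝ) := by exact_mod_cast ha2
    have : Real.sqrt 2 ≤ -((0:ℝ) * (1 + Real.sqrt 2) - a) := by nlinarith
    calc Real.sqrt 2 ≤ -(((0:ℤ) : ℝ) * (1 + Real.sqrt 2) - a) := by push_cast; nlinarith
    _ ≤ |((0:ℤ) : ℝ) * (1 + Real.sqrt 2) - a| := neg_le_abs _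
  · -- b ≥ 1
    have hb1 : 1 ≤ b := hb
    rcases lt_trichotomy b 1 with hbb | hbb | hbb
    · omega
    · -- b = 1
      subst hbb
      rcases le_or_gt a 1 with ha | ha
      · have har : (a : ℝ) ≤ 1 := by exact_mod_cast ha
        have hval : Real.sqrt 2 ≤ (1 : ℝ) * (1 + Real.sqrt 2) - a := by nlinarith
        calc Real.sqrt 2 ≤ ((1:ℤ) : ℝ) * (1 + Real.sqrt 2) - a := by push_cast; nlinarith
        _ ≤ |((1:ℤ) : ℝ) * (1 + Real.sqrt 2) - a| := le_abs_self _
      · have ha3 : 3 ≤ a := by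
          rcases lt_trichotomy a 2 with h | h | h
          · omega
          · exact absurd ⟨h, rfl⟩ hex2
          · omega
        exfalso; nlinarith
    · -- b ≥ 2
      have hb2 : 2 ≤ b := hbb
      rcases le_or_gt a 2 with ha | ha
      · have har : (a : ℝ) ≤ 2 := by exact_mod_cast ha
        have hbr : (2 : ℝ) ≤ (b : ℝ) := by exact_mod_cast hb2
        have hval : Real.sqrt 2 ≤ (b : ℝ) * (1 + Real.sqrt 2) - a := by nlinarith
        exact hval.trans (le_abs_self _)
      · exfalso; nlinarith

end Cases
section PsiEq

open Filter Real

variable {α : ℝ} {N : ℕ}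

lemma psiFn_nonneg (α t : ℝ) : 0 ≤ psiFn α t := by
  apply Real.sInf_nonneg
  rintro x ⟨p, q, -, -, rfl⟩
  positivity

lemma psi2Fn_nonneg (α t : ℝ) : 0 ≤ psi2Fn α t := by
  apply Real.sInf_nonneg
  rintro x ⟨p, q, -, -, -, rfl⟩
  positivity

lemma psi2sFn_nonneg (α t : ℝ) : 0 ≤ psi2sFn α t := by
  apply Real.sInf_nonneg
  rintro x ⟨p, q, -, -, -, rfl⟩
  positivity

lemma psiFn_eq (hα : Irrational α) (hN : 1 ≤ N)
    (htail : ∀ m, N ≤ m → gaussIter α m = 1 + Real.sqrt 2)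
    (n : ℕ) (hn : N ≤ n) (t : ℝ)
    (h1 : (cfDen α (n + 1) : ℝ) ≤ t) (h2 : t < (cfDen α (n + 2) : ℝ)) :
    psiFn α t = cfXi α (n + 1) := by
  have hxipos := cfXi_pos hα (n + 1)
  have hratio : cfXi α n = (1 + Real.sqrt 2) * cfXi α (n + 1) :=
    cfXi_tail hα htail n (by omega)
  have hden2 : cfDen α (n + 2) = 2 * cfDen α (n + 1) + cfDen α n :=
    cfDen_tail htail n (by omega)
  have hQ' : 1 ≤ cfDen α n := cfDen_one_le hα n
  have hQ : cfDen α n < cfDen α (n + 1) := cfDen_lt_succ hα n (by omega)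
  have hmem : cfXi α (n + 1) ∈ {x : ℝ | ∃ p q : ℤ, 1 ≤ q ∧ (q : ℝ) ≤ t ∧
      x = |(q : ℝ) * α - (p : ℝ)|} :=
    ⟨cfNum α (n + 1), cfDen α (n + 1), cfDen_one_le hα (n + 1), h1, by rw [cfXi]⟩
  rw [psiFn]
  apply le_antisymm
  · exact csInf_le ⟨0, by rintro x ⟨p, q, -, -, rfl⟩; positivity⟩ hmem
  · apply le_csInf ⟨_, hmem⟩
    rintro x ⟨p, q, hq1, hqt, rfl⟩
    obtain ⟨a, b, hqa, hpa, hval⟩ := basis_rep hα n p q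
    have hqlt : q < cfDen α (n + 2) := by exact_mod_cast hqt.trans_lt h2
    have hcase : 1 ≤ |(b : ℝ) * (1 + Real.sqrt 2) - (a : ℝ)| := by
      apply case_one (cfDen α (n + 1)) (cfDen α n) a b hQ' hQ
      · omega
      · omega
    rw [hval, hratio]
    have habs : |(-1 : ℝ)^n * ((b : ℝ) * ((1 + Real.sqrt 2) * cfXi α (n+1)) -
        (a : ℝ) * cfXi α (n + 1))| =
        |(b : ℝ) * (1 + Real.sqrt 2) - (a : ℝ)| * cfXi α (n + 1) := by
      rw [abs_mul, abs_pow, abs_neg, abs_one, one_pow, one_mul]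
      rw [show (b : ℝ) * ((1 + Real.sqrt 2) * cfXi α (n+1)) - (a : ℝ) * cfXi α (n + 1)
          = ((b : ℝ) * (1 + Real.sqrt 2) - (a : ℝ)) * cfXi α (n + 1) by ring]
      rw [abs_mul, abs_of_pos hxipos]
    rw [habs]
    nlinarith
end PsiEq
section Psi2Eq

open Filter Real

variable {α : ℝ} {N : ℕ}

lemma witness_val (hα : Irrational α) (n : ℕ) :
    ((cfDen α (n+1) + cfDen α n : ℤ) : ℝ) * α - ((cfNum α (n+1) + cfNum α n : ℤ) : ℝ) =
      (-1 : ℝ)^n * (cfXi α n - cfXi α (n + 1)) := by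
  have := basis_val hα n (cfNum α (n+1) + cfNum α n) (cfDen α (n+1) + cfDen α n) 1 1
    (by ring) (by ring)
  rw [this]
  push_cast
  ring

lemma witness_abs (hα : Irrational α) (n : ℕ) :
    |((cfDen α (n+1) + cfDen α n : ℤ) : ℝ) * α - ((cfNum α (n+1) + cfNum α n : ℤ) : ℝ)| =
      cfXi α n - cfXi α (n + 1) := by
  rw [witness_val hα n, abs_mul, abs_pow, abs_neg, abs_one, one_pow, one_mul]
  exact abs_of_pos (by linarith [cfXi_lt hα n])

lemma psi2_lower (hα : Irrational α) (hN : 1 ≤ N)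
    (htail : ∀ m, N ≤ m → gaussIter α m = 1 + Real.sqrt 2)
    (n : ℕ) (hn : N ≤ n) (t : ℝ) (h2 : t < ((cfDen α (n + 2) + cfDen α (n + 1) : ℤ) : ℝ))
    (p q : ℤ) (hq1 : 1 ≤ q) (hqt : (q : ℝ) ≤ t)
    (hexc : ∀ k : ℕ, ¬(p = cfNum α k ∧ q = cfDen α k)) :
    cfXi α n - cfXi α (n + 1) ≤ |(q : ℝ) * α - (p : ℝ)| := by
  have hxipos := cfXi_pos hα (n + 1)
  have hratio : cfXi α n = (1 + Real.sqrt 2) * cfXi α (n + 1) :=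
    cfXi_tail hα htail n (by omega)
  have hden2 : cfDen α (n + 2) = 2 * cfDen α (n + 1) + cfDen α n :=
    cfDen_tail htail n (by omega)
  have hnum2 : cfNum α (n + 2) = 2 * cfNum α (n + 1) + cfNum α n :=
    cfNum_tail htail n (by omega)
  have hQ' : 1 ≤ cfDen α n := cfDen_one_le hα n
  have hQ : cfDen α n < cfDen α (n + 1) := cfDen_lt_succ hα n (by omega)
  obtain ⟨a, b, hqa, hpa, hval⟩ := basis_rep hα n p q
  have hqlt : q < cfDen α (n + 2) + cfDen α (n + 1) := by exact_mod_cast hqt.trans_lt h2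
  have hex1 : ¬(a = 1 ∧ b = 0) := by
    rintro ⟨rfl, rfl⟩
    exact hexc (n + 1) ⟨by linarith [hpa], by linarith [hqa]⟩
  have hex2 : ¬(a = 2 ∧ b = 1) := by
    rintro ⟨rfl, rfl⟩
    exact hexc (n + 2) ⟨by omega, by omega⟩
  have hcase : Real.sqrt 2 ≤ |(b : ℝ) * (1 + Real.sqrt 2) - (a : ℝ)| := by
    apply case_two (cfDen α (n + 1)) (cfDen α n) a b hQ' hQ
    · omega
    · omega
    · exact hex1
    · exact hex2
  rw [hval]
  have habs : |(-1 : ℝ)^n * ((b : ℝ) * cfXi α n - (a : ℝ) * cfXi α (n + 1))| =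
      |(b : ℝ) * (1 + Real.sqrt 2) - (a : ℝ)| * cfXi α (n + 1) := by
    rw [abs_mul, abs_pow, abs_neg, abs_one, one_pow, one_mul, hratio]
    rw [show (b : ℝ) * ((1 + Real.sqrt 2) * cfXi α (n+1)) - (a : ℝ) * cfXi α (n + 1)
        = ((b : ℝ) * (1 + Real.sqrt 2) - (a : ℝ)) * cfXi α (n + 1) by ring]
    rw [abs_mul, abs_of_pos hxipos]
  rw [habs, hratio]
  nlinarith

lemma psi2Fn_eq (hα : Irrational α) (hN : 1 ≤ N)
    (htail : ∀ m, N ≤ m → gaussIter α m = 1 + Real.sqrt 2)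
    (n : ℕ) (hn : N ≤ n) (t : ℝ)
    (h1 : ((cfDen α (n + 1) + cfDen α n : ℤ) : ℝ) ≤ t)
    (h2 : t < ((cfDen α (n + 2) + cfDen α (n + 1) : ℤ) : ℝ)) :
    psi2Fn α t = cfXi α n - cfXi α (n + 1) := by
  have hQ' : 1 ≤ cfDen α n := cfDen_one_le hα n
  have hQ1 : 1 ≤ cfDen α (n + 1) := cfDen_one_le hα (n + 1)
  have hden2 : cfDen α (n + 2) = 2 * cfDen α (n + 1) + cfDen α n :=
    cfDen_tail htail n (by omega)
  have hmem : cfXi α n - cfXi α (n + 1) ∈ {x : ℝ | ∃ p q : ℤ, 1 ≤ q ∧ (q : ℝ) ≤ t ∧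
      (∀ k : ℕ, ¬(p = cfNum α k ∧ q = cfDen α k)) ∧ x = |(q : ℝ) * α - (p : ℝ)|} := by
    refine ⟨cfNum α (n+1) + cfNum α n, cfDen α (n+1) + cfDen α n, by omega, h1, ?_,
      (witness_abs hα n).symm⟩
    intro k hk
    rcases le_or_gt k (n + 1) with hkle | hkgt
    · have := cfDen_mono hα hkle
      omega
    · have : cfDen α (n + 2) ≤ cfDen α k := cfDen_mono hα (by omega)
      omega
  rw [psi2Fn]
  apply le_antisymm
  · exact csInf_le ⟨0, by rintro x ⟨p, q, -, -, -, rfl⟩; positivity⟩ hmem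
  · apply le_csInf ⟨_, hmem⟩
    rintro x ⟨p, q, hq1, hqt, hexc, rfl⟩
    exact psi2_lower hα hN htail n hn t h2 p q hq1 hqt hexc

end Psi2Eq
section Psi2sEq

open Filter Real

variable {α : ℝ} {N : ℕ}

lemma psi2sFn_eq (hα : Irrational α) (hN : 1 ≤ N)
    (htail : ∀ m, N ≤ m → gaussIter α m = 1 + Real.sqrt 2)
    (n : ℕ) (hn : N ≤ n) (t : ℝ)
    (h1 : ((cfDen α (n + 1) + cfDen α n : ℤ) : ℝ) ≤ t)
    (h2 : t < ((cfDen α (n + 2) + cfDen α (n + 1) : ℤ) : ℝ)) :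
    psi2sFn α t = cfXi α n - cfXi α (n + 1) := by
  have hQ' : 1 ≤ cfDen α n := cfDen_one_le hα n
  have hQ1 : 1 ≤ cfDen α (n + 1) := cfDen_one_le hα (n + 1)
  have hxipos := cfXi_pos hα (n + 1)
  have hxipos2 := cfXi_pos hα (n + 2)
  have hratio : cfXi α n = (1 + Real.sqrt 2) * cfXi α (n + 1) :=
    cfXi_tail hα htail n (by omega)
  have hratio1 : cfXi α (n + 1) = (1 + Real.sqrt 2) * cfXi α (n + 2) :=
    cfXi_tail hα htail (n + 1) (by omega)
  have hden2 : cfDen α (n + 2) = 2 * cfDen α (n + 1) + cfDen α n :=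
    cfDen_tail htail n (by omega)
  set p₀ : ℤ := cfNum α (n+1) + cfNum α n with hp₀
  set q₀ : ℤ := cfDen α (n+1) + cfDen α n with hq₀
  have hq₀pos : (0 : ℝ) < (q₀ : ℝ) := by
    have : (1 : ℤ) ≤ q₀ := by omega
    exact_mod_cast lt_of_lt_of_le zero_lt_one (by exact_mod_cast this)
  have hmem : cfXi α n - cfXi α (n + 1) ∈ {x : ℝ | ∃ p q : ℤ, 1 ≤ q ∧ (q : ℝ) ≤ t ∧
      (∀ k : ℕ, (p : ℝ) / (q : ℝ) ≠ (cfNum α k : ℝ) / (cfDen α k : ℝ)) ∧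
      x = |(q : ℝ) * α - (p : ℝ)|} := by
    refine ⟨p₀, q₀, by omega, h1, ?_, (witness_abs hα n).symm⟩
    intro k hk
    have hdkpos : (0 : ℝ) < (cfDen α k : ℝ) := by
      exact_mod_cast lt_of_lt_of_le zero_lt_one (by exact_mod_cast cfDen_one_le hα k)
    have hcross : (p₀ : ℝ) * (cfDen α k : ℝ) = (cfNum α k : ℝ) * (q₀ : ℝ) :=
      (div_eq_div_iff hq₀pos.ne' hdkpos.ne').mp hk
    have habs : (cfDen α k : ℝ) * (cfXi α n - cfXi α (n+1)) = (q₀ : ℝ) * cfXi α k := by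
      have hlin : (cfDen α k : ℝ) * ((q₀ : ℝ) * α - (p₀ : ℝ)) =
          (q₀ : ℝ) * ((cfDen α k : ℝ) * α - (cfNum α k : ℝ)) := by
        linear_combination -hcross
      have := congrArg abs hlin
      rw [abs_mul, abs_mul, abs_of_pos hdkpos, abs_of_pos hq₀pos, witness_abs hα n] at this
      rw [this, cfXi]
    rcases le_or_gt k n with hkle | hkgt
    · have hdk : (cfDen α k : ℝ) ≤ (cfDen α n : ℝ) := by exact_mod_cast cfDen_mono hα hkle
      have hxk : cfXi α n ≤ cfXi α k := (cfXi_anti hα).antitone hkle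
      have hdnq : (cfDen α n : ℝ) < (q₀ : ℝ) := by
        have : cfDen α n < q₀ := by omega
        exact_mod_cast this
      have hxin : 0 < cfXi α n := cfXi_pos hα n
      have c1 : (cfDen α k : ℝ) * (cfXi α n - cfXi α (n+1)) < (cfDen α k : ℝ) * cfXi α n :=
        mul_lt_mul_of_pos_left (by linarith) hdkpos
      have c2 : (cfDen α k : ℝ) * cfXi α n ≤ (cfDen α n : ℝ) * cfXi α n :=
        mul_le_mul_of_nonneg_right hdk (le_of_lt hxin)
      have c3 : (cfDen α n : ℝ) * cfXi α n < (q₀ : ℝ) * cfXi α n :=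
        mul_lt_mul_of_pos_right hdnq hxin
      have c4 : (q₀ : ℝ) * cfXi α n ≤ (q₀ : ℝ) * cfXi α k :=
        mul_le_mul_of_nonneg_left hxk (le_of_lt hq₀pos)
      linarith
    rcases eq_or_lt_of_le (Nat.succ_le_of_lt hkgt) with hkeq | hkgt2
    · -- k = n + 1
      have hk1 : k = n + 1 := hkeq.symm
      subst hk1
      have hcrossZ : p₀ * cfDen α (n+1) = cfNum α (n+1) * q₀ := by exact_mod_cast hcross
      have hD := cfDet' α n
      have : (0 : ℤ) = (-1)^n := by
        rw [← hD]
        have : cfNum α (n+1) * cfDen α n - cfNum α n * cfDen α (n+1) = 0 := by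
          have hexp : (cfNum α (n+1) + cfNum α n) * cfDen α (n+1)
              = cfNum α (n+1) * (cfDen α (n+1) + cfDen α n) := hcrossZ
          linear_combination -hexp
        omega
      rcases Nat.even_or_odd n with he | ho
      · rw [he.neg_one_pow] at this; omega
      · rw [ho.neg_one_pow] at this; omega
    · -- k ≥ n + 2
      have hk2 : n + 2 ≤ k := hkgt2
      have hdk : (cfDen α (n + 2) : ℝ) ≤ (cfDen α k : ℝ) := by
        exact_mod_cast cfDen_mono hα hk2
      have hxk : cfXi α k ≤ cfXi α (n + 2) := (cfXi_anti hα).antitone hk2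
      have hqdk : (q₀ : ℝ) < (cfDen α k : ℝ) := by
        have : q₀ < cfDen α k := by
          have := cfDen_mono hα hk2
          omega
        exact_mod_cast this
      have hgap : cfXi α (n + 2) < cfXi α n - cfXi α (n + 1) := by
        rw [hratio, hratio1]
        nlinarith [sqrt2_gt, hxipos2]
      have c1 : (q₀ : ℝ) * cfXi α k ≤ (q₀ : ℝ) * cfXi α (n + 2) :=
        mul_le_mul_of_nonneg_left hxk (le_of_lt hq₀pos)
      have c2 : (q₀ : ℝ) * cfXi α (n + 2) < (cfDen α k : ℝ) * cfXi α (n + 2) :=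
        mul_lt_mul_of_pos_right hqdk hxipos2
      have c3 : (cfDen α k : ℝ) * cfXi α (n + 2) < (cfDen α k : ℝ) * (cfXi α n - cfXi α (n+1)) :=
        mul_lt_mul_of_pos_left hgap hdkpos
      linarith
  rw [psi2sFn]
  apply le_antisymm
  · exact csInf_le ⟨0, by rintro x ⟨p, q, -, -, -, rfl⟩; positivity⟩ hmem
  · apply le_csInf ⟨_, hmem⟩
    rintro x ⟨p, q, hq1, hqt, hexc, rfl⟩
    apply psi2_lower hα hN htail n hn t h2 p q hq1 hqt
    intro k hk
    obtain ⟨hk1, hk2⟩ := hk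
    exact hexc k (by rw [hk1, hk2])

end Psi2sEq
section Limits

open Filter Real

variable {α : ℝ} {N : ℕ}

lemma r_facts : (1 + Real.sqrt 2)^2 = 2*(1 + Real.sqrt 2) + 1 ∧
    (1 - Real.sqrt 2)^2 = 2*(1 - Real.sqrt 2) + 1 := by
  constructor <;> nlinarith [sqrt2_sq]

lemma r_pos : (0:ℝ) < 1 + Real.sqrt 2 := by nlinarith [sqrt2_gt]

lemma rr_abs : |(1 - Real.sqrt 2)/(1 + Real.sqrt 2)| < 1 := by
  rw [abs_div, abs_of_pos r_pos]
  rw [div_lt_one r_pos]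
  rw [abs_lt]
  constructor <;> nlinarith [sqrt2_gt, sqrt2_lt]

section ClosedForm

variable (hα : Irrational α) (hN : 1 ≤ N)
  (htail : ∀ m, N ≤ m → gaussIter α m = 1 + Real.sqrt 2)

noncomputable def cA (α : ℝ) (N : ℕ) : ℝ :=
  ((cfDen α (N+1) : ℝ) - (1 - Real.sqrt 2) * (cfDen α N : ℝ)) / (2 * Real.sqrt 2)

noncomputable def cB (α : ℝ) (N : ℕ) : ℝ :=
  ((1 + Real.sqrt 2) * (cfDen α N : ℝ) - (cfDen α (N+1) : ℝ)) / (2 * Real.sqrt 2)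

lemma den_closed (hα : Irrational α)
    (htail : ∀ m, N ≤ m → gaussIter α m = 1 + Real.sqrt 2) :
    ∀ k, (cfDen α (N + k) : ℝ) =
      cA α N * (1 + Real.sqrt 2)^k + cB α N * (1 - Real.sqrt 2)^k := by
  have hs2 : Real.sqrt 2 ≠ 0 := by nlinarith [sqrt2_gt]
  intro k
  induction k using Nat.twoStepInduction with
  | zero => rw [cA, cB]; field_simp; ring
  | one =>
    rw [cA, cB]
    field_simp
    nlinarith [sqrt2_sq, sqrt2_gt, sq_nonneg (Real.sqrt 2)]
  | more k ih0 ih1 =>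
    have hrec : cfDen α (N + k + 2) = 2 * cfDen α (N + k + 1) + cfDen α (N + k) :=
      cfDen_tail htail (N + k) (by omega)
    have e2 : N + (k + 2) = N + k + 2 := by omega
    have e1 : N + (k + 1) = N + k + 1 := by omega
    rw [e2, hrec]
    push_cast
    rw [show N + k + 1 = N + (k+1) by omega] at *
    rw [ih1, ih0]
    have h1 := r_facts.1
    have h2 := r_facts.2
    linear_combination (cA α N * (1 + Real.sqrt 2)^k) * h1 +
      (cB α N * (1 - Real.sqrt 2)^k) * h2 +
      (-2*(cA α N * (1 + Real.sqrt 2)^k + cB α N * (1 - Real.sqrt 2)^k)) * sqrt2_sq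

lemma xi_closed (hα : Irrational α)
    (htail : ∀ m, N ≤ m → gaussIter α m = 1 + Real.sqrt 2) :
    ∀ k, cfXi α (N + k) * (1 + Real.sqrt 2)^k = cfXi α N := by
  intro k
  induction k with
  | zero => simp
  | succ j ih =>
    have hr : cfXi α (N + j) = (1 + Real.sqrt 2) * cfXi α (N + j + 1) :=
      cfXi_tail hα htail (N + j) (by omega)
    rw [show N + (j + 1) = N + j + 1 by omega, pow_succ]
    have e : cfXi α (N+j+1) * ((1 + Real.sqrt 2)^j * (1 + Real.sqrt 2))
        = ((1 + Real.sqrt 2) * cfXi α (N+j+1)) * (1 + Real.sqrt 2)^j := by ring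
    rw [e, ← hr, ih]

lemma sigma_tendsto (hα : Irrational α)
    (htail : ∀ m, N ≤ m → gaussIter α m = 1 + Real.sqrt 2) :
    Tendsto (fun n => (cfDen α n : ℝ) * cfXi α n) atTop
      (nhds (cfXi α N * cA α N)) := by
  have hrp := r_pos
  set r : ℝ := 1 + Real.sqrt 2 with hrdef
  set r' : ℝ := 1 - Real.sqrt 2 with hr'def
  set X := cfXi α N
  set A := cA α N
  set B := cB α N
  have hpow : Tendsto (fun k : ℕ => (r'/r)^k) atTop (nhds 0) :=
    tendsto_pow_atTop_nhds_zero_iff.mpr rr_abs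
  have h0 : Tendsto (fun k : ℕ => X*A + X*B*(r'/r)^k) atTop (nhds (X*A)) := by
    have := (hpow.const_mul (X*B)).const_add (X*A)
    simpa using this
  have heq : ∀ k : ℕ, (cfDen α (N + k) : ℝ) * cfXi α (N + k) = X*A + X*B*(r'/r)^k := by
    intro k
    have hd := den_closed hα htail k
    have hx := xi_closed hα htail k
    have hrk : r^k ≠ 0 := pow_ne_zero _ (ne_of_gt hrp)
    have hxk : cfXi α (N + k) = X / r^k := by
      field_simp
      linarith [hx]
    rw [hd, hxk, div_pow]
    field_simp
    ring
  have h1 : Tendsto (fun k : ℕ => (cfDen α (N + k) : ℝ) * cfXi α (N + k)) atTop (nhds (X*A)) := by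
    rw [show (fun k : ℕ => (cfDen α (N + k) : ℝ) * cfXi α (N + k))
      = fun k : ℕ => X*A + X*B*(r'/r)^k from funext heq]
    exact h0
  have := (Filter.tendsto_add_atTop_iff_nat (f := fun n => (cfDen α n : ℝ) * cfXi α n) N).mp
    (by  convert h1 using 2 with k; rw [Nat.add_comm])
  exact this

lemma kappa_tendsto (hα : Irrational α)
    (htail : ∀ m, N ≤ m → gaussIter α m = 1 + Real.sqrt 2) :
    Tendsto (fun n => ((cfDen α (n+1) + cfDen α n : ℤ) : ℝ) * (cfXi α n - cfXi α (n+1))) atTop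
      (nhds (2 * (cfXi α N * cA α N))) := by
  have hrp := r_pos
  have hs2 : Real.sqrt 2 ≠ 0 := by nlinarith [sqrt2_gt]
  set r : ℝ := 1 + Real.sqrt 2 with hrdef
  set r' : ℝ := 1 - Real.sqrt 2 with hr'def
  set X := cfXi α N
  set A := cA α N
  set B := cB α N
  set C1 : ℝ := X * (1 - 1/r) * (A * (r + 1)) with hC1
  set C2 : ℝ := X * (1 - 1/r) * (B * (r' + 1)) with hC2
  have hpow : Tendsto (fun k : ℕ => (r'/r)^k) atTop (nhds 0) :=
    tendsto_pow_atTop_nhds_zero_iff.mpr rr_abs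
  have h0 : Tendsto (fun k : ℕ => C1 + C2*(r'/r)^k) atTop (nhds C1) := by
    have := (hpow.const_mul C2).const_add C1
    simpa using this
  have hC1val : C1 = 2 * (X * A) := by
    rw [hC1]
    have h1 := r_facts.1
    field_simp
    linear_combination (X*A) * h1
  have heq : ∀ k : ℕ, ((cfDen α (N+k+1) + cfDen α (N+k) : ℤ) : ℝ) *
      (cfXi α (N+k) - cfXi α (N+k+1)) = C1 + C2*(r'/r)^k := by
    intro k
    have hd0 := den_closed hα htail k
    have hd1 := den_closed hα htail (k+1)
    have hx0 := xi_closed hα htail k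
    have hx1 := xi_closed hα htail (k+1)
    have hrk : r^k ≠ 0 := pow_ne_zero _ (ne_of_gt hrp)
    have hrk1 : r^(k+1) ≠ 0 := pow_ne_zero _ (ne_of_gt hrp)
    have hxk : cfXi α (N + k) = X / r^k := by field_simp; linarith [hx0]
    have hxk1 : cfXi α (N + k + 1) = X / r^(k+1) := by
      rw [show N + k + 1 = N + (k+1) by omega]
      field_simp
      linarith [hx1]
    push_cast
    rw [show N + k + 1 = N + (k+1) by omega] at *
    rw [hd0, hd1, hxk, hxk1, hC1, hC2]
    rw [pow_succ]
    simp only [← hrdef, ← hr'def, div_pow]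
    field_simp
    ring
  have h1 : Tendsto (fun k : ℕ => ((cfDen α (N+k+1) + cfDen α (N+k) : ℤ) : ℝ) *
      (cfXi α (N+k) - cfXi α (N+k+1))) atTop (nhds (2 * (X*A))) := by
    rw [funext heq, ← hC1val]
    exact h0
  have h2 : Tendsto (fun k : ℕ => ((cfDen α (k + N + 1) + cfDen α (k + N) : ℤ) : ℝ) *
      (cfXi α (k + N) - cfXi α (k + N + 1))) atTop (nhds (2 * (X*A))) := by
    have e : (fun k : ℕ => ((cfDen α (k + N + 1) + cfDen α (k + N) : ℤ) : ℝ) *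
        (cfXi α (k + N) - cfXi α (k + N + 1)))
        = (fun k : ℕ => ((cfDen α (N + k + 1) + cfDen α (N + k) : ℤ) : ℝ) *
        (cfXi α (N + k) - cfXi α (N + k + 1))) := by
      funext k
      rw [Nat.add_comm k N]
    rw [e]
    exact h1
  exact (Filter.tendsto_add_atTop_iff_nat
    (f := fun n => ((cfDen α (n+1) + cfDen α n : ℤ) : ℝ) * (cfXi α n - cfXi α (n+1))) N).mp h2

lemma cA_pos (hα : Irrational α) : 0 < cA α N := by
  rw [cA]
  have h1 : (1:ℝ) ≤ (cfDen α (N+1) : ℝ) := by exact_mod_cast cfDen_one_le hα (N+1)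
  have h0 : (1:ℝ) ≤ (cfDen α N : ℝ) := by exact_mod_cast cfDen_one_le hα N
  have := sqrt2_gt
  apply div_pos
  · nlinarith
  · nlinarith

end ClosedForm

end Limits
section Master

open Filter Real

lemma master (α : ℝ) (hα : Irrational α) (N : ℕ) (hN : 1 ≤ N)
    (htail : ∀ m, N ≤ m → gaussIter α m = 1 + Real.sqrt 2) :
    ∃ L : ℝ, 0 < L ∧
      Tendsto (fun n => (cfDen α n : ℝ) * cfXi α n) atTop (nhds L) ∧
      lamOf α = L ∧ kOf α = 2 * L ∧ ksOf α = 2 * L := by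
  set L : ℝ := cfXi α N * cA α N with hL
  have hLpos : 0 < L := mul_pos (cfXi_pos hα N) (cA_pos hα)
  have hσ : Tendsto (fun n => (cfDen α n : ℝ) * cfXi α n) atTop (nhds L) :=
    sigma_tendsto hα htail
  have hκ : Tendsto (fun n => ((cfDen α (n+1) + cfDen α n : ℤ) : ℝ) *
      (cfXi α n - cfXi α (n+1))) atTop (nhds (2 * L)) := kappa_tendsto hα htail
  refine ⟨L, hLpos, hσ, ?_, ?_, ?_⟩
  · -- lamOf
    apply liminf_eq_of_bounds
    · intro ε hε
      obtain ⟨M0, hM0⟩ := Metric.tendsto_atTop.mp hσ ε hε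
      set M := max M0 N with hM
      filter_upwards [eventually_ge_atTop ((cfDen α (M+1) : ℝ))] with t ht
      obtain ⟨n, hnM, hle, hlt⟩ := exists_step (fun k => cfDen α (k+1))
        (fun k => cfDen_lt_succ hα (k+1) (by omega)) M t ht
      have hψ := psiFn_eq hα hN htail n (le_trans (le_max_right M0 N) hnM) t hle hlt
      rw [hψ]
      have hd := hM0 (n+1) (by omega)
      rw [Real.dist_eq, abs_lt] at hd
      have hxi : (0:ℝ) ≤ cfXi α (n+1) := le_of_lt (cfXi_pos hα (n+1))
      have := mul_le_mul_of_nonneg_right hle hxi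
      linarith
    · intro ε hε
      obtain ⟨M0, hM0⟩ := Metric.tendsto_atTop.mp hσ ε hε
      rw [Filter.frequently_atTop]
      intro t₀
      obtain ⟨k0, hk0⟩ := exists_nat_ge t₀
      set n := max (max M0 N) k0 with hn
      have hcd : t₀ ≤ (cfDen α (n+1) : ℝ) := by
        have h1 : ((n:ℤ) + 1) ≤ cfDen α (n+1) := by
          have := cfDen_ge hα (n+1); push_cast at this ⊢; omega
        have h2 : (k0:ℤ) ≤ (n:ℤ) + 1 := by
          have : k0 ≤ n := le_max_right _ _
          omega
        have h3 : ((k0:ℤ):ℝ) ≤ ((cfDen α (n+1) : ℤ):ℝ) := by exact_mod_cast le_trans h2 h1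
        push_cast at h3
        linarith [hk0]
      refine ⟨(cfDen α (n+1) : ℝ), hcd, ?_⟩
      have hψ := psiFn_eq hα hN htail n (by omega) (cfDen α (n+1) : ℝ) (le_refl _)
        (by exact_mod_cast cfDen_lt_succ hα (n+1) (by omega))
      rw [hψ]
      have hd := hM0 (n+1) (by omega)
      rw [Real.dist_eq, abs_lt] at hd
      linarith
  · -- kOf
    apply liminf_eq_of_bounds
    · intro ε hε
      obtain ⟨M0, hM0⟩ := Metric.tendsto_atTop.mp hκ ε hε
      set M := max M0 N with hM
      filter_upwards [eventually_ge_atTop (((cfDen α (M+1) + cfDen α M : ℤ) : ℝ))] with t ht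
      obtain ⟨n, hnM, hle, hlt⟩ := exists_step (fun k => cfDen α (k+1) + cfDen α k)
        (fun k => by
          show cfDen α (k+1) + cfDen α (k) < cfDen α (k+1+1) + cfDen α (k+1)
          have h1 := cfDen_lt_succ hα (k+1) (by omega)
          have h2 := cfDen_le_succ hα k
          omega) M t ht
      have hψ := psi2Fn_eq hα hN htail n (le_trans (le_max_right M0 N) hnM) t hle hlt
      rw [hψ]
      have hd := hM0 n (by omega)
      rw [Real.dist_eq, abs_lt] at hd
      have hxi : (0:ℝ) ≤ cfXi α n - cfXi α (n+1) := by linarith [cfXi_lt hα n]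
      have := mul_le_mul_of_nonneg_right hle hxi
      linarith
    · intro ε hε
      obtain ⟨M0, hM0⟩ := Metric.tendsto_atTop.mp hκ ε hε
      rw [Filter.frequently_atTop]
      intro t₀
      obtain ⟨k0, hk0⟩ := exists_nat_ge t₀
      set n := max (max M0 N) k0 with hn
      have hcd : (t₀ : ℝ) ≤ ((cfDen α (n+1) + cfDen α n : ℤ) : ℝ) := by
        have h1 : ((n:ℤ) + 1) ≤ cfDen α (n+1) := by
          have := cfDen_ge hα (n+1); push_cast at this ⊢; omega
        have h0 : (1:ℤ) ≤ cfDen α n := cfDen_one_le hα n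
        have h2 : (k0:ℤ) ≤ (n:ℤ) := by exact_mod_cast le_max_right (max M0 N) k0
        have h3 : ((k0:ℤ):ℝ) ≤ ((cfDen α (n+1) + cfDen α n : ℤ) : ℝ) := by
          exact_mod_cast (by omega : (k0:ℤ) ≤ cfDen α (n+1) + cfDen α n)
        push_cast at h3 ⊢
        linarith [hk0]
      refine ⟨((cfDen α (n+1) + cfDen α n : ℤ) : ℝ), hcd, ?_⟩
      have hlt2 : ((cfDen α (n+1) + cfDen α n : ℤ) : ℝ) <
          ((cfDen α (n+2) + cfDen α (n+1) : ℤ) : ℝ) := by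
        have h1 : cfDen α (n+1) < cfDen α (n+2) := cfDen_lt_succ hα (n+1) (by omega)
        have h2 := cfDen_le_succ hα n
        exact_mod_cast by omega
      have hψ := psi2Fn_eq hα hN htail n (by omega) _ (le_refl _) hlt2
      rw [hψ]
      have hd := hM0 n (by omega)
      rw [Real.dist_eq, abs_lt] at hd
      linarith
  · -- ksOf
    apply liminf_eq_of_bounds
    · intro ε hε
      obtain ⟨M0, hM0⟩ := Metric.tendsto_atTop.mp hκ ε hε
      set M := max M0 N with hM
      filter_upwards [eventually_ge_atTop (((cfDen α (M+1) + cfDen α M : ℤ) : ℝ))] with t ht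
      obtain ⟨n, hnM, hle, hlt⟩ := exists_step (fun k => cfDen α (k+1) + cfDen α k)
        (fun k => by
          show cfDen α (k+1) + cfDen α (k) < cfDen α (k+1+1) + cfDen α (k+1)
          have h1 := cfDen_lt_succ hα (k+1) (by omega)
          have h2 := cfDen_le_succ hα k
          omega) M t ht
      have hψ := psi2sFn_eq hα hN htail n (le_trans (le_max_right M0 N) hnM) t hle hlt
      rw [hψ]
      have hd := hM0 n (by omega)
      rw [Real.dist_eq, abs_lt] at hd
      have hxi : (0:ℝ) ≤ cfXi α n - cfXi α (n+1) := by linarith [cfXi_lt hα n]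
      have := mul_le_mul_of_nonneg_right hle hxi
      linarith
    · intro ε hε
      obtain ⟨M0, hM0⟩ := Metric.tendsto_atTop.mp hκ ε hε
      rw [Filter.frequently_atTop]
      intro t₀
      obtain ⟨k0, hk0⟩ := exists_nat_ge t₀
      set n := max (max M0 N) k0 with hn
      have hcd : (t₀ : ℝ) ≤ ((cfDen α (n+1) + cfDen α n : ℤ) : ℝ) := by
        have h1 : ((n:ℤ) + 1) ≤ cfDen α (n+1) := by
          have := cfDen_ge hα (n+1); push_cast at this ⊢; omega
        have h0 : (1:ℤ) ≤ cfDen α n := cfDen_one_le hα n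
        have h2 : (k0:ℤ) ≤ (n:ℤ) := by exact_mod_cast le_max_right (max M0 N) k0
        have h3 : ((k0:ℤ):ℝ) ≤ ((cfDen α (n+1) + cfDen α n : ℤ) : ℝ) := by
          exact_mod_cast (by omega : (k0:ℤ) ≤ cfDen α (n+1) + cfDen α n)
        push_cast at h3 ⊢
        linarith [hk0]
      refine ⟨((cfDen α (n+1) + cfDen α n : ℤ) : ℝ), hcd, ?_⟩
      have hlt2 : ((cfDen α (n+1) + cfDen α n : ℤ) : ℝ) <
          ((cfDen α (n+2) + cfDen α (n+1) : ℤ) : ℝ) := by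
        have h1 : cfDen α (n+1) < cfDen α (n+2) := cfDen_lt_succ hα (n+1) (by omega)
        have h2 := cfDen_le_succ hα n
        exact_mod_cast by omega
      have hψ := psi2sFn_eq hα hN htail n (by omega) _ (le_refl _) hlt2
      rw [hψ]
      have hd := hM0 n (by omega)
      rw [Real.dist_eq, abs_lt] at hd
      linarith

end Master
section Serret

open Filter Real

lemma gauss_step {α x : ℝ} {m : ℕ} {b : ℤ} (h : gaussIter α m = (b : ℝ) + x⁻¹)
    (hx : 1 < x) : gaussIter α (m + 1) = x := by
  have hxpos : (0:ℝ) < x := by linarith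
  have h0 : 0 < x⁻¹ := inv_pos.mpr hxpos
  have h1 : x⁻¹ < 1 := by
    have := mul_inv_cancel₀ (ne_of_gt hxpos)
    nlinarith
  rw [gaussIter_succ, h, Int.fract_intCast_add, Int.fract_eq_self.mpr ⟨le_of_lt h0, h1⟩, inv_inv]

lemma realize : ∀ (Fb : ℕ) (F F' E E' : ℤ), F.natAbs ≤ Fb → 1 ≤ F' → F' < F →
    (E * F' - E' * F = 1 ∨ E * F' - E' * F = -1) → ∀ x : ℝ, 1 < x →
    ∃ m : ℕ, gaussIter (((E : ℝ) * x + (E' : ℝ)) / ((F : ℝ) * x + (F' : ℝ))) m = x := by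
  intro Fb
  induction Fb with
  | zero => intro F F' E E' hFb hF' hFF _ x _; exfalso; omega
  | succ n ih =>
    intro F F' E E' hFb hF' hFF hdet x hx
    have hxpos : (0:ℝ) < x := by linarith
    have hxi : (0:ℝ) < x⁻¹ := inv_pos.mpr hxpos
    have hF2 : 2 ≤ F := by omega
    have hFR : (2:ℝ) ≤ (F:ℝ) := by exact_mod_cast hF2
    have hF'R : (1:ℝ) ≤ (F':ℝ) := by exact_mod_cast hF'
    rcases eq_or_lt_of_le hF' with hF1 | hF1
    · -- F' = 1
      have hF1' : F' = 1 := hF1.symm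
      subst hF1'
      have hFx : (0:ℝ) < (F:ℝ) * x + 1 := by nlinarith
      rcases hdet with hd | hd
      · -- E = E'*F + 1
        have hER : (E:ℝ) = (E':ℝ) * (F:ℝ) + 1 := by exact_mod_cast (by omega : E = E' * F + 1)
        have hy : (1:ℝ) < (F:ℝ) + x⁻¹ := by nlinarith
        have h0 : ((E : ℝ) * x + (E' : ℝ)) / ((F : ℝ) * x + (1 : ℤ)) =
            (E' : ℝ) + ((F:ℝ) + x⁻¹)⁻¹ := by
          have e1 : (F:ℝ) + x⁻¹ = ((F:ℝ)*x + 1)/x := by field_simp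
          rw [e1, inv_div]
          push_cast
          field_simp
          linear_combination x * hER
        have g1 : gaussIter (((E : ℝ) * x + (E' : ℝ)) / ((F : ℝ) * x + ((1:ℤ) : ℝ))) 1
            = (F:ℝ) + x⁻¹ := by
          apply gauss_step (b := E') _ hy
          show ((E : ℝ) * x + (E' : ℝ)) / ((F : ℝ) * x + ((1:ℤ):ℝ)) = (E':ℝ) + ((F:ℝ) + x⁻¹)⁻¹
          push_cast at h0 ⊢
          exact h0
        refine ⟨2, ?_⟩
        apply gauss_step (b := F) _ hx
        rw [g1]
      · -- E = E'*F - 1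
        have hER : (E:ℝ) = (E':ℝ) * (F:ℝ) - 1 := by exact_mod_cast (by omega : E = E' * F - 1)
        have hy2 : (1:ℝ) < ((F:ℝ) - 1) + x⁻¹ := by nlinarith
        have hy2pos : (0:ℝ) < ((F:ℝ) - 1) + x⁻¹ := by linarith
        have hy1 : (1:ℝ) < 1 + (((F:ℝ) - 1) + x⁻¹)⁻¹ := by
          have := inv_pos.mpr hy2pos; linarith
        have h0 : ((E : ℝ) * x + (E' : ℝ)) / ((F : ℝ) * x + ((1:ℤ):ℝ)) =
            ((E' - 1 : ℤ) : ℝ) + (1 + (((F:ℝ) - 1) + x⁻¹)⁻¹)⁻¹ := by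
          have e1 : ((F:ℝ) - 1) + x⁻¹ = (((F:ℝ) - 1)*x + 1)/x := by field_simp
          have hw : (0:ℝ) < ((F:ℝ) - 1)*x + 1 := by nlinarith
          rw [e1, inv_div]
          have e2 : 1 + x / (((F:ℝ) - 1)*x + 1) = ((F:ℝ)*x + 1)/(((F:ℝ) - 1)*x + 1) := by
            rw [eq_div_iff hw.ne', add_mul, div_mul_cancel₀ _ hw.ne']
            ring
          rw [e2, inv_div]
          push_cast
          field_simp
          linear_combination x * hER
        have g1 : gaussIter (((E : ℝ) * x + (E' : ℝ)) / ((F : ℝ) * x + ((1:ℤ):ℝ))) 1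
            = 1 + (((F:ℝ) - 1) + x⁻¹)⁻¹ := by
          apply gauss_step (b := E' - 1) _ hy1
          push_cast at h0 ⊢
          exact h0
        have g2 : gaussIter (((E : ℝ) * x + (E' : ℝ)) / ((F : ℝ) * x + ((1:ℤ):ℝ))) 2
            = ((F:ℝ) - 1) + x⁻¹ := by
          apply gauss_step (b := 1) _ hy2
          rw [g1]; push_cast; ring
        refine ⟨3, ?_⟩
        apply gauss_step (b := F - 1) _ hx
        rw [g2]; push_cast; ring
    · -- 1 < F'
      set b : ℤ := F / F' with hb
      set F'' : ℤ := F % F' with hF''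
      have hF'pos : (0:ℤ) < F' := by omega
      have hdiv : F = b * F' + F'' := by rw [hb, hF'']; rw [mul_comm]; exact (Int.mul_ediv_add_emod F F').symm
      have hb1 : 1 ≤ b := by
        rw [hb]
        exact (Int.le_ediv_iff_mul_le hF'pos).mpr (by omega)
      have hF''nonneg : 0 ≤ F'' := Int.emod_nonneg F (by omega)
      have hF''lt : F'' < F' := Int.emod_lt_of_pos F hF'pos
      have hF''pos : 1 ≤ F'' := by
        rcases eq_or_lt_of_le hF''nonneg with h0 | h0
        · exfalso
          have hu : F = F' * b := by rw [mul_comm]; omega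
          have hdvd1 : F' ∣ 1 := by
            rcases hdet with hd | hd
            · exact ⟨E - E' * b, by linear_combination -hd - E' * hu⟩
            · exact dvd_neg.mp ⟨E - E' * b, by linear_combination -hd - E' * hu⟩
          have : F' ≤ 1 := Int.le_of_dvd one_pos hdvd1
          omega
        · omega
      have hdet2 : E' * F'' - (E - b * E') * F' = 1 ∨ E' * F'' - (E - b * E') * F' = -1 := by
        rcases hdet with hd | hd
        · right; linear_combination -hd - E' * hdiv
        · left; linear_combination -hd - E' * hdiv
      have hxb : (1:ℝ) < (b:ℝ) + x⁻¹ := by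
        have : (1:ℝ) ≤ (b:ℝ) := by exact_mod_cast hb1
        linarith
      obtain ⟨m, hm⟩ := ih F' F'' E' (E - b * E') (by omega) hF''pos hF''lt hdet2
        ((b:ℝ) + x⁻¹) hxb
      have hEq : ((E : ℝ) * x + (E' : ℝ)) / ((F : ℝ) * x + (F' : ℝ)) =
          ((E' : ℝ) * ((b:ℝ) + x⁻¹) + ((E - b * E' : ℤ) : ℝ)) /
          ((F' : ℝ) * ((b:ℝ) + x⁻¹) + ((F'' : ℤ) : ℝ)) := by
        have hFx : (0:ℝ) < (F:ℝ) * x + F' := by nlinarith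
        have hdivR : (F:ℝ) = (b:ℝ) * (F':ℝ) + (F'':ℝ) := by exact_mod_cast hdiv
        have hden2 : (F' : ℝ) * ((b:ℝ) + x⁻¹) + (F'' : ℝ) ≠ 0 := by
          have h1 : (1:ℝ) ≤ (b:ℝ) := by exact_mod_cast hb1
          have h2 : (0:ℝ) ≤ (F'':ℝ) := by exact_mod_cast hF''nonneg
          nlinarith
        have hxx : x * x⁻¹ = 1 := mul_inv_cancel₀ (ne_of_gt hxpos)
        rw [div_eq_div_iff (ne_of_gt hFx) hden2]
        push_cast
        linear_combination ((E:ℝ)*(F':ℝ) - (E':ℝ)*((b:ℝ)*(F':ℝ) + (F'':ℝ))) * hxx +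
          (-(((E:ℝ) + (E':ℝ)*x⁻¹)*x)) * hdivR
      rw [hEq]
      exact ⟨m + 1, gauss_step (by rw [hm]) hx⟩

end Serret
section Pell

open Filter Real

def pellP : ℕ → ℤ
  | 0 => 1
  | 1 => 3
  | n + 2 => 2 * pellP (n + 1) + pellP n

def pellQ : ℕ → ℤ
  | 0 => 1
  | 1 => 2
  | n + 2 => 2 * pellQ (n + 1) + pellQ n

lemma pellQ_rec (n : ℕ) : pellQ (n + 2) = 2 * pellQ (n + 1) + pellQ n := rfl
lemma pellP_rec (n : ℕ) : pellP (n + 2) = 2 * pellP (n + 1) + pellP n := rfl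

lemma pellQ_pos : ∀ n, 1 ≤ pellQ n := by
  intro n
  induction n using Nat.twoStepInduction with
  | zero => norm_num [pellQ]
  | one => norm_num [pellQ]
  | more k ih0 ih1 => rw [pellQ_rec]; omega

lemma pellQ_ge : ∀ n : ℕ, ((n : ℤ) + 1 : ℤ) ≤ pellQ n := by
  intro n
  induction n using Nat.twoStepInduction with
  | zero => norm_num [pellQ]
  | one => norm_num [pellQ]
  | more k ih0 ih1 => rw [pellQ_rec]; push_cast at *; omega

lemma pellQ_double : ∀ n, 2 * pellQ n ≤ pellQ (n + 1) := by
  intro n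
  match n with
  | 0 => norm_num [pellQ]
  | k + 1 => rw [pellQ_rec]; have := pellQ_pos k; omega

lemma pell_identity : ∀ m : ℕ, Real.sqrt 2 * ((pellQ (m+1) : ℝ) * (1 + Real.sqrt 2) + pellQ m)
    = (pellP (m+1) : ℝ) * (1 + Real.sqrt 2) + pellP m := by
  intro m
  induction m with
  | zero =>
    show Real.sqrt 2 * (((2:ℤ) : ℝ) * (1 + Real.sqrt 2) + ((1:ℤ):ℝ))
        = ((3:ℤ) : ℝ) * (1 + Real.sqrt 2) + ((1:ℤ):ℝ)
    push_cast
    linear_combination 2 * sqrt2_sq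
  | succ k ih =>
    rw [pellQ_rec, pellP_rec]
    push_cast
    have h1 := r_facts.1
    linear_combination (1 + Real.sqrt 2) * ih -
      (Real.sqrt 2 * (pellQ (k+1) : ℝ) - (pellP (k+1) : ℝ)) * h1

lemma pell_det : ∀ m : ℕ, pellP (m+1) * pellQ m - pellP m * pellQ (m+1) = (-1)^m := by
  intro m
  induction m with
  | zero => norm_num [pellP, pellQ]
  | succ k ih =>
    rw [pellQ_rec, pellP_rec, pow_succ]
    linear_combination -ih

lemma pell_err : ∀ m : ℕ, |Real.sqrt 2 * (pellQ m : ℝ) - (pellP m : ℝ)| ≤ 1/2 := by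
  intro m
  induction m with
  | zero =>
    show |Real.sqrt 2 * ((1:ℤ) : ℝ) - ((1:ℤ) : ℝ)| ≤ 1/2
    push_cast
    rw [abs_le]
    constructor <;> nlinarith [sqrt2_gt, sqrt2_lt]
  | succ k ih =>
    have hrel : (1 + Real.sqrt 2) * (Real.sqrt 2 * (pellQ (k+1) : ℝ) - (pellP (k+1) : ℝ))
        = -(Real.sqrt 2 * (pellQ k : ℝ) - (pellP k : ℝ)) := by
      linear_combination pell_identity k
    have habs := congrArg abs hrel
    rw [abs_mul, abs_of_pos r_pos, abs_neg] at habs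
    have hr1 : (1:ℝ) ≤ 1 + Real.sqrt 2 := by nlinarith [sqrt2_gt]
    have hnn : 0 ≤ |Real.sqrt 2 * (pellQ (k+1) : ℝ) - (pellP (k+1) : ℝ)| := abs_nonneg _
    nlinarith [habs, ih, hnn]

lemma floor_r : (⌊1 + Real.sqrt 2⌋ : ℤ) = 2 := by
  rw [Int.floor_eq_iff]
  constructor
  · push_cast; nlinarith [sqrt2_gt]
  · push_cast; nlinarith [sqrt2_lt]

lemma tail_const (α : ℝ) (m : ℕ) (h : gaussIter α m = 1 + Real.sqrt 2) :
    ∀ n, m ≤ n → gaussIter α n = 1 + Real.sqrt 2 := by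
  intro n hn
  induction n, hn using Nat.le_induction with
  | base => exact h
  | succ k hk ihk =>
    rw [gaussIter_succ, ihk]
    have hfr : Int.fract (1 + Real.sqrt 2) = Real.sqrt 2 - 1 := by
      rw [Int.fract, floor_r]
      push_cast
      ring
    rw [hfr]
    have hmul : (Real.sqrt 2 - 1) * (Real.sqrt 2 + 1) = 1 := by nlinarith [sqrt2_sq]
    rw [inv_eq_of_mul_eq_one_right hmul]
    ring

lemma mul_abs_bound (c y : ℝ) (h : |y| ≤ 1/2) :
    c * y ≤ |c| * (1/2) ∧ -(|c| * (1/2)) ≤ c * y := by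
  have h1 : |c * y| ≤ |c| * (1/2) := by
    rw [abs_mul]
    exact mul_le_mul_of_nonneg_left h (abs_nonneg c)
  constructor
  · exact (le_abs_self _).trans h1
  · have h2 := neg_abs_le (c * y)
    linarith

lemma serret_aux (α : ℝ) (A B C D : ℤ)
    (hdet : A * D - B * C = 1 ∨ A * D - B * C = -1)
    (hW : 0 < (C : ℝ) * Real.sqrt 2 + (D : ℝ))
    (hαeq : α = ((A : ℝ) * Real.sqrt 2 + (B : ℝ)) / ((C : ℝ) * Real.sqrt 2 + (D : ℝ))) :
    ∃ N, 1 ≤ N ∧ ∀ m, N ≤ m → gaussIter α m = 1 + Real.sqrt 2 := by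
  set W : ℝ := (C : ℝ) * Real.sqrt 2 + (D : ℝ) with hWdef
  -- choose k with pellQ k * W large
  obtain ⟨k, hk⟩ := exists_nat_ge ((|(C:ℝ)| + 1) / W)
  have hQk : ((|(C:ℝ)| + 1) / W) * W ≤ (pellQ k : ℝ) * W := by
    have h1 : ((k:ℤ) : ℝ) ≤ (pellQ k : ℝ) := by exact_mod_cast (by have := pellQ_ge k; omega : (k:ℤ) ≤ pellQ k)
    push_cast at h1
    apply mul_le_mul_of_nonneg_right _ (le_of_lt hW)
    linarith
  have hQkW : |(C:ℝ)| + 1 ≤ (pellQ k : ℝ) * W := by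
    rwa [div_mul_cancel₀ _ (ne_of_gt hW)] at hQk
  set F : ℤ := C * pellP (k+1) + D * pellQ (k+1) with hF
  set F' : ℤ := C * pellP k + D * pellQ k with hF'
  set E : ℤ := A * pellP (k+1) + B * pellQ (k+1) with hE
  set E' : ℤ := A * pellP k + B * pellQ k with hE'
  have herr0 := pell_err k
  have herr1 := pell_err (k+1)
  -- F' ≥ 1
  have hF'val : (F' : ℝ) = (pellQ k : ℝ) * W - (C:ℝ) * (Real.sqrt 2 * (pellQ k : ℝ) - (pellP k : ℝ)) := by
    rw [hF']; push_cast; rw [hWdef]; ring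
  have hCabs := mul_abs_bound (C:ℝ) (Real.sqrt 2 * (pellQ k : ℝ) - (pellP k : ℝ)) herr0
  have hCabs1 := mul_abs_bound (C:ℝ) (Real.sqrt 2 * (pellQ (k+1) : ℝ) - (pellP (k+1) : ℝ)) herr1
  have hF'ge : (1:ℝ) ≤ (F' : ℝ) := by
    rw [hF'val]
    have := hCabs.1
    linarith [hQkW]
  have hF'int : 1 ≤ F' := by exact_mod_cast hF'ge
  have hFval : (F : ℝ) = (pellQ (k+1) : ℝ) * W -
      (C:ℝ) * (Real.sqrt 2 * (pellQ (k+1) : ℝ) - (pellP (k+1) : ℝ)) := by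
    rw [hF]; push_cast; rw [hWdef]; ring
  have hFgt : (F' : ℝ) + 1 ≤ (F : ℝ) := by
    rw [hFval, hF'val]
    have hgap : (pellQ k : ℝ) ≤ (pellQ (k+1) : ℝ) - (pellQ k : ℝ) := by
      have := pellQ_double k
      have h2 : (2 * pellQ k : ℤ) ≤ pellQ (k+1) := this
      have : ((2 * pellQ k : ℤ) : ℝ) ≤ ((pellQ (k+1) : ℤ) : ℝ) := by exact_mod_cast h2
      push_cast at this
      linarith
    have hmul : (pellQ k : ℝ) * W ≤ ((pellQ (k+1) : ℝ) - (pellQ k : ℝ)) * W :=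
      mul_le_mul_of_nonneg_right hgap (le_of_lt hW)
    have h1 := hCabs.2
    have h2 := hCabs1.1
    have habs0 : (0:ℝ) ≤ |(C:ℝ)| := abs_nonneg _
    nlinarith [hQkW]
  have hFint : F' < F := by
    have : (F' : ℝ) < (F : ℝ) := by linarith
    exact_mod_cast this
  have hdet2 : E * F' - E' * F = 1 ∨ E * F' - E' * F = -1 := by
    have key : E * F' - E' * F = (A * D - B * C) * (pellP (k+1) * pellQ k - pellP k * pellQ (k+1)) := by
      rw [hE, hE', hF, hF']; ring
    rw [pell_det k] at key
    rcases hdet with hd | hd <;> rcases Nat.even_or_odd k with he | he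
    · left; rw [key, hd, he.neg_one_pow]; ring
    · right; rw [key, hd, he.neg_one_pow]; ring
    · right; rw [key, hd, he.neg_one_pow]; ring
    · left; rw [key, hd, he.neg_one_pow]; ring
  have hαrep : α = ((E : ℝ) * (1 + Real.sqrt 2) + (E' : ℝ)) /
      ((F : ℝ) * (1 + Real.sqrt 2) + (F' : ℝ)) := by
    have hid := pell_identity k
    have hFden : (0:ℝ) < (F : ℝ) * (1 + Real.sqrt 2) + (F' : ℝ) := by
      have h1 : (0:ℝ) < 1 + Real.sqrt 2 := r_pos
      nlinarith [hF'ge, hFgt]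
    rw [hαeq, div_eq_div_iff (ne_of_gt hW) (ne_of_gt hFden)]
    rw [hE, hE', hF, hF']
    push_cast
    linear_combination ((A:ℝ) * (D:ℝ) - (B:ℝ) * (C:ℝ)) * hid
  obtain ⟨m, hm⟩ := realize F.natAbs F F' E E' (le_refl _) hF'int hFint hdet2
    (1 + Real.sqrt 2) (by nlinarith [sqrt2_gt])
  rw [← hαrep] at hm
  refine ⟨m + 1, by omega, ?_⟩
  intro j hj
  exact tail_const α m hm j (by omega)

lemma serret (α : ℝ) (hα : Irrational α) (heq : CFEquiv α (Real.sqrt 2)) :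
    ∃ N, 1 ≤ N ∧ ∀ m, N ≤ m → gaussIter α m = 1 + Real.sqrt 2 := by
  obtain ⟨a, b, c, d, hdet, hab⟩ := heq
  have hs2 : (0:ℝ) < Real.sqrt 2 := by nlinarith [sqrt2_gt]
  have hcd : (c : ℝ) * α + (d : ℝ) ≠ 0 := by
    intro h0
    rw [h0, div_zero] at hab
    linarith [hab, hs2]
  rw [eq_div_iff hcd] at hab
  have hca : (c : ℝ) * Real.sqrt 2 - (a : ℝ) ≠ 0 := by
    intro h0
    have hc0 : c = 0 := by
      by_contra hc
      apply irrational_sqrt_two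
      refine ⟨(a : ℚ) / (c : ℚ), ?_⟩
      have hcR : (c : ℝ) ≠ 0 := Int.cast_ne_zero.mpr hc
      push_cast
      rw [div_eq_iff hcR]
      linarith [h0]
    have ha0 : a = 0 := by
      rw [hc0] at h0
      push_cast at h0
      exact_mod_cast (by linarith [h0] : (a:ℝ) = 0)
    rw [hc0, ha0] at hdet
    simp at hdet
  have hkey : α * ((c : ℝ) * Real.sqrt 2 - (a : ℝ)) = (b : ℝ) - (d : ℝ) * Real.sqrt 2 := by
    linear_combination hab
  have hdisj : a * d - b * c = 1 ∨ a * d - b * c = -1 :=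
    (abs_eq (by norm_num : (0:ℤ) ≤ 1)).mp hdet
  rcases lt_or_gt_of_ne hca with hn | hp
  · -- c√2 - a < 0 : use (d, -b, -c, a)
    apply serret_aux α d (-b) (-c) a
    · rcases hdisj with h | h
      · left; linear_combination h
      · right; linear_combination h
    · push_cast
      linarith
    · have hden : ((-c : ℤ) : ℝ) * Real.sqrt 2 + (a : ℝ) ≠ 0 := by
        push_cast
        intro h0
        apply hca
        linarith
      rw [eq_div_iff hden]
      push_cast
      linear_combination -hkey
  · -- c√2 - a > 0 : use (-d, b, c, -a)
    apply serret_aux α (-d) b c (-a)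
    · rcases hdisj with h | h
      · left; linear_combination h
      · right; linear_combination h
    · push_cast
      linarith
    · have hden : ((c : ℤ) : ℝ) * Real.sqrt 2 + ((-a : ℤ) : ℝ) ≠ 0 := by
        push_cast
        intro h0
        apply hca
        linarith
      rw [eq_div_iff hden]
      push_cast
      linear_combination hkey

end Pell
section Final

open Filter Real

lemma floor_sqrt2 : (⌊Real.sqrt 2⌋ : ℤ) = 1 := by
  rw [Int.floor_eq_iff]
  constructor
  · push_cast; nlinarith [sqrt2_gt]
  · push_cast; nlinarith [sqrt2_lt]

lemma gauss_sqrt2_one : gaussIter (Real.sqrt 2) 1 = 1 + Real.sqrt 2 := by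
  rw [gaussIter_succ]
  have h0 : gaussIter (Real.sqrt 2) 0 = Real.sqrt 2 := rfl
  rw [h0, Int.fract, floor_sqrt2]
  have hmul : (Real.sqrt 2 - (1:ℤ)) * (1 + Real.sqrt 2) = 1 := by
    push_cast
    nlinarith [sqrt2_sq]
  rw [inv_eq_of_mul_eq_one_right hmul]

lemma sqrt2_tail : ∀ m, 1 ≤ m → gaussIter (Real.sqrt 2) m = 1 + Real.sqrt 2 :=
  tail_const (Real.sqrt 2) 1 gauss_sqrt2_one

lemma cfDen_sqrt2_zero : cfDen (Real.sqrt 2) 0 = 1 := rfl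

lemma cfDen_sqrt2_one : cfDen (Real.sqrt 2) 1 = 2 := by
  rw [cfDen, cfQ_rec, cfQ_one, cfQ_zero, cfA, gauss_sqrt2_one, floor_r]
  norm_num

lemma cfXi_sqrt2_zero : cfXi (Real.sqrt 2) 0 = Real.sqrt 2 - 1 := by
  rw [cfXi]
  have h1 : cfDen (Real.sqrt 2) 0 = 1 := rfl
  have h2 : cfNum (Real.sqrt 2) 0 = 1 := by rw [cfNum, cfP_one, floor_sqrt2]
  rw [h1, h2]
  push_cast
  rw [one_mul]
  exact abs_of_nonneg (by nlinarith [sqrt2_gt])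

lemma xi_sqrt2 : ∀ n, cfXi (Real.sqrt 2) n * (1 + Real.sqrt 2)^(n+1) = 1 := by
  intro n
  induction n with
  | zero =>
    rw [cfXi_sqrt2_zero, pow_one]
    nlinarith [sqrt2_sq]
  | succ k ih =>
    have ht : cfXi (Real.sqrt 2) k = (1 + Real.sqrt 2) * cfXi (Real.sqrt 2) (k+1) :=
      cfXi_tail irrational_sqrt_two sqrt2_tail k (by omega)
    calc cfXi (Real.sqrt 2) (k+1) * (1 + Real.sqrt 2)^(k+2)
        = ((1 + Real.sqrt 2) * cfXi (Real.sqrt 2) (k+1)) * (1 + Real.sqrt 2)^(k+1) := by ring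
    _ = cfXi (Real.sqrt 2) k * (1 + Real.sqrt 2)^(k+1) := by rw [← ht]
    _ = 1 := ih

lemma den_sqrt2 : ∀ n, (cfDen (Real.sqrt 2) n : ℝ) * (2 * Real.sqrt 2)
    = (1 + Real.sqrt 2)^(n+1) - (1 - Real.sqrt 2)^(n+1) := by
  intro n
  induction n using Nat.twoStepInduction with
  | zero => rw [cfDen_sqrt2_zero]; push_cast; ring
  | one => rw [cfDen_sqrt2_one]; push_cast; ring
  | more k ih0 ih1 =>
    have hrec : cfDen (Real.sqrt 2) (k + 2)
        = 2 * cfDen (Real.sqrt 2) (k + 1) + cfDen (Real.sqrt 2) k :=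
      cfDen_tail sqrt2_tail k (by omega)
    rw [hrec]
    push_cast
    have h1 := r_facts.1
    have h2 := r_facts.2
    calc (2 * (cfDen (Real.sqrt 2) (k+1) : ℝ) + (cfDen (Real.sqrt 2) k : ℝ)) * (2 * Real.sqrt 2)
        = 2 * ((cfDen (Real.sqrt 2) (k+1) : ℝ) * (2 * Real.sqrt 2))
          + (cfDen (Real.sqrt 2) k : ℝ) * (2 * Real.sqrt 2) := by ring
    _ = 2 * ((1 + Real.sqrt 2)^(k+2) - (1 - Real.sqrt 2)^(k+2))
          + ((1 + Real.sqrt 2)^(k+1) - (1 - Real.sqrt 2)^(k+1)) := by rw [ih1, ih0]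
    _ = (1 + Real.sqrt 2)^(k+1) * (2 * (1 + Real.sqrt 2) + 1)
          - (1 - Real.sqrt 2)^(k+1) * (2 * (1 - Real.sqrt 2) + 1) := by ring
    _ = (1 + Real.sqrt 2)^(k+2+1) - (1 - Real.sqrt 2)^(k+2+1) := by
        rw [← h1, ← h2]; ring

lemma sigma_sqrt2 : Tendsto (fun n => (cfDen (Real.sqrt 2) n : ℝ) * cfXi (Real.sqrt 2) n)
    atTop (nhds (1 / (2 * Real.sqrt 2))) := by
  have hs2 : (0:ℝ) < Real.sqrt 2 := by nlinarith [sqrt2_gt]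
  have hform : ∀ n : ℕ, (cfDen (Real.sqrt 2) n : ℝ) * cfXi (Real.sqrt 2) n
      = (1 - ((1 - Real.sqrt 2)/(1 + Real.sqrt 2))^(n+1)) / (2 * Real.sqrt 2) := by
    intro n
    have h1 := xi_sqrt2 n
    have h2 := den_sqrt2 n
    have hrn : (0:ℝ) < (1 + Real.sqrt 2)^(n+1) := pow_pos r_pos _
    have hξ : cfXi (Real.sqrt 2) n = ((1 + Real.sqrt 2)^(n+1))⁻¹ :=
      eq_inv_of_mul_eq_one_left h1
    rw [hξ, div_pow]
    rw [eq_div_iff (by positivity : (2 * Real.sqrt 2) ≠ 0)]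
    rw [show (cfDen (Real.sqrt 2) n : ℝ) * ((1 + Real.sqrt 2)^(n+1))⁻¹ * (2 * Real.sqrt 2)
        = ((cfDen (Real.sqrt 2) n : ℝ) * (2 * Real.sqrt 2)) * ((1 + Real.sqrt 2)^(n+1))⁻¹ by ring]
    rw [h2]
    field_simp
  rw [funext hform]
  have hpow : Tendsto (fun n : ℕ => ((1 - Real.sqrt 2)/(1 + Real.sqrt 2))^n) atTop (nhds 0) :=
    tendsto_pow_atTop_nhds_zero_iff.mpr rr_abs
  have hpow1 : Tendsto (fun n : ℕ => ((1 - Real.sqrt 2)/(1 + Real.sqrt 2))^(n+1)) atTop (nhds 0) := by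
    have := hpow.const_mul ((1 - Real.sqrt 2)/(1 + Real.sqrt 2))
    simp only [mul_zero] at this
    have e : (fun n : ℕ => ((1 - Real.sqrt 2)/(1 + Real.sqrt 2))^(n+1))
        = fun n : ℕ => ((1 - Real.sqrt 2)/(1 + Real.sqrt 2)) * ((1 - Real.sqrt 2)/(1 + Real.sqrt 2))^n := by
      funext n; rw [pow_succ]; ring
    rw [e]
    exact this
  have := (hpow1.const_sub 1).div_const (2 * Real.sqrt 2)
  simpa using this

/-- If `α` is irrational and equivalent to `√2`, then
`𝔨*(α) = 𝔨(α) = 2·λ(α)`; in particular `λ(√2) = 1/√8` and `𝔨(√2) = 𝔨*(√2) = 1/√2`. -/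
theorem stmt1 :
    (∀ α : ℝ, Irrational α → CFEquiv α (Real.sqrt 2) →
      ksOf α = kOf α ∧ kOf α = 2 * lamOf α) ∧
    lamOf (Real.sqrt 2) = 1 / Real.sqrt 8 ∧
    kOf (Real.sqrt 2) = 1 / Real.sqrt 2 ∧
    ksOf (Real.sqrt 2) = 1 / Real.sqrt 2 := by
  have hs2 : (0:ℝ) < Real.sqrt 2 := by nlinarith [sqrt2_gt]
  have hmain : ∀ α : ℝ, Irrational α → CFEquiv α (Real.sqrt 2) →
      ksOf α = kOf α ∧ kOf α = 2 * lamOf α := by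
    intro α hα heq
    obtain ⟨N, hN, htail⟩ := serret α hα heq
    obtain ⟨L, hLpos, hσ, hlam, hk, hks⟩ := master α hα N hN htail
    exact ⟨by rw [hks, hk], by rw [hk, hlam]⟩
  refine ⟨hmain, ?_⟩
  obtain ⟨L, hLpos, hσ, hlam, hk, hks⟩ :=
    master (Real.sqrt 2) irrational_sqrt_two 1 le_rfl sqrt2_tail
  have hLval : L = 1 / (2 * Real.sqrt 2) := tendsto_nhds_unique hσ sigma_sqrt2
  have h8 : Real.sqrt 8 = 2 * Real.sqrt 2 := by
    rw [show (8:ℝ) = (2 * Real.sqrt 2)^2 by nlinarith [sqrt2_sq]]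
    exact Real.sqrt_sq (by positivity)
  refine ⟨?_, ?_, ?_⟩
  · rw [hlam, hLval, h8]
  · rw [hk, hLval, mul_one_div, div_eq_div_iff (by positivity) (ne_of_gt hs2)]
    ring
  · rw [hks, hLval, mul_one_div, div_eq_div_iff (by positivity) (ne_of_gt hs2)]
    ring

end Final
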